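/- arXiv:2110.05374 — 4 statements merged into one kernel-verified Lean document; each statement's English description precedes it below -/
import Mathlib

section
/- For every graph G on vertex set [n] and every c = (c₁,…,cₙ) ∈ ℝ₊ⁿ, D(G,c) ≤ χ_f(G) · ‖c‖₂², where D(G,c) := min over fractional forest vertex covers {(F_k, w_k)}_k of G of ( ∑_k w_k · sqrt( ∑_{{i,j} ∈ E(G[F_k])} (c_i + c_j)² + ∑_{T ∈ 𝒯(F_k)} c_{min,k,T}² ) )², with c_{min,k,T} := min{ c_i : i ∈ T }, χ_f(G) is the fractional chromatic number of G, and ‖c‖₂² = ∑_{i=1}^n c_i². -/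
open MeasureTheory ProbabilityTheory BigOperators

open Classical in
/-- `f` is `c`-Lipschitz with respect to the Hamming metric. -/
def CLipschitzOn {ι : Type*} [Fintype ι] {Ω : ι → Type*} (c : ι → ℝ)
    (f : (∀ i, Ω i) → ℝ) : Prop :=
  ∀ x y : ∀ i, Ω i, |f x - f y| ≤ ∑ i, if x i ≠ y i then c i else 0

/-- `X` is `G`-dependent: families of variables indexed by disjoint non-adjacent
vertex sets are independent. -/
def GDependent {α : Type*} [MeasurableSpace α] (μ : Measure α)
    {n : ℕ} {Ω : Fin n → Type*} [∀ i, MeasurableSpace (Ω i)]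
    (G : SimpleGraph (Fin n)) (X : ∀ i, α → Ω i) : Prop :=
  ∀ S T : Finset (Fin n), Disjoint S T →
    (∀ i ∈ S, ∀ j ∈ T, ¬ G.Adj i j) →
    IndepFun (fun a => fun i : S => X i.1 a) (fun a => fun j : T => X j.1 a) μ

/-- The function sending an unordered pair `{i, j}` to `(w i + w j)^2`. -/
def sym2Sq {ι : Type*} (w : ι → ℝ) : Sym2 ι → ℝ :=
  Sym2.lift ⟨fun i j => (w i + w j) ^ 2, fun i j => by ring_nf⟩

open Classical in
/-- `∑_{{i,j} ∈ E(G)} (w i + w j)^2`. -/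
noncomputable def edgeWeightSum {ι : Type*} [Fintype ι] (G : SimpleGraph ι) (w : ι → ℝ) : ℝ :=
  ∑ e ∈ G.edgeFinset, sym2Sq w e

open Classical in
/-- Sum, over the connected components (trees) `T` of `G`, of the squared minimum
of `w` over the vertices of `T`. -/
noncomputable def compMinSqSum {ι : Type*} [Fintype ι] (G : SimpleGraph ι) (w : ι → ℝ) : ℝ :=
  ∑ K : G.ConnectedComponent, (⨅ v : {v // G.connectedComponentMk v = K}, w v.1) ^ 2

/-- A fractional forest vertex cover of `G`: a finite family of pairs `(F k, w k)` with
`w k ∈ [0,1]`, `∑_{k : v ∈ F k} w k = 1` for every vertex `v`, and every induced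
subgraph `G[F k]` a forest. -/
structure FFC {n : ℕ} (G : SimpleGraph (Fin n)) where
  K : ℕ
  F : Fin K → Finset (Fin n)
  w : Fin K → ℝ
  w_nonneg : ∀ k, 0 ≤ w k
  w_le_one : ∀ k, w k ≤ 1
  cover : ∀ v : Fin n, ∑ k ∈ Finset.univ.filter (fun k => v ∈ F k), w k = 1
  acyclic : ∀ k, (G.induce ((F k : Set (Fin n)))).IsAcyclic

/-- `(∑_k w_k √(∑_{{i,j} ∈ E(G[F_k])} (c_i+c_j)² + ∑_{T ∈ 𝒯(F_k)} c_{min,k,T}²))²`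
for a fractional forest vertex cover. -/
noncomputable def FFC.value {n : ℕ} {G : SimpleGraph (Fin n)} (c : Fin n → ℝ) (C : FFC G) : ℝ :=
  (∑ k : Fin C.K, C.w k * Real.sqrt
      (edgeWeightSum (G.induce ((C.F k : Set (Fin n)))) (fun v => c v.1)
        + compMinSqSum (G.induce ((C.F k : Set (Fin n)))) (fun v => c v.1))) ^ 2

/-- `D(G, c)`: the minimum of `FFC.value` over all fractional forest vertex covers of `G`. -/
noncomputable def DFFC {n : ℕ} (G : SimpleGraph (Fin n)) (c : Fin n → ℝ) : ℝ :=
  sInf (Set.range fun C : FFC G => C.value c)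

/-- `f` is forest-decomposable `c`-Lipschitz with respect to `G`. -/
def ForestDecomposable {n : ℕ} {Ω : Fin n → Type*} (G : SimpleGraph (Fin n))
    (c : Fin n → ℝ) (f : (∀ i, Ω i) → ℝ) : Prop :=
  ∀ C : FFC G, ∃ g : (k : Fin C.K) → ((i : C.F k) → Ω i.1) → ℝ,
    (∀ k, CLipschitzOn (fun i : C.F k => c i.1) (g k)) ∧
    ∀ x : ∀ i, Ω i, f x = ∑ k : Fin C.K, C.w k * g k (fun i => x i.1)

/-- `I` is an independent set of `G`. -/
def IsIndepFinset {n : ℕ} (G : SimpleGraph (Fin n)) (I : Finset (Fin n)) : Prop :=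
  ∀ i ∈ I, ∀ j ∈ I, ¬ G.Adj i j

/-- `g` is a fractional coloring of `G`: a `[0,1]`-valued weighting of the independent
sets of `G` such that every vertex receives total weight at least `1`. -/
def IsFracColoring {n : ℕ} (G : SimpleGraph (Fin n)) (g : Finset (Fin n) → ℝ) : Prop :=
  (∀ I, 0 ≤ g I ∧ g I ≤ 1) ∧ (∀ I, ¬ IsIndepFinset G I → g I = 0) ∧
    ∀ v : Fin n, 1 ≤ ∑ I ∈ Finset.univ.filter (fun I : Finset (Fin n) => v ∈ I), g I

/-- The fractional chromatic number of `G`. -/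
noncomputable def fracChromatic {n : ℕ} (G : SimpleGraph (Fin n)) : ℝ :=
  sInf {x : ℝ | ∃ g : Finset (Fin n) → ℝ, IsFracColoring G g ∧ x = ∑ I : Finset (Fin n), g I}


def IsIndepFinset' {n : ℕ} (G : SimpleGraph (Fin n)) (I : Finset (Fin n)) : Prop :=
  ∀ i ∈ I, ∀ j ∈ I, ¬ G.Adj i j

section Aux

open Finset

variable {n : ℕ} {G : SimpleGraph (Fin n)}

/-- Cover sum of a weighted family at a vertex. -/
noncomputable def covS {ι : Type} [Fintype ι] (F : ι → Finset (Fin n)) (w : ι → ℝ)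
    (v : Fin n) : ℝ :=
  ∑ k : ι, if v ∈ F k then w k else 0

lemma covS_step (v : Fin n) {ι : Type} [Fintype ι] (F : ι → Finset (Fin n)) (w : ι → ℝ)
    (h0 : ∀ k, 0 ≤ w k) (hge : 1 ≤ covS F w v) :
    ∃ u : ι → ℝ, (∀ k, 0 ≤ u k) ∧ (∀ k, u k ≤ (if v ∈ F k then w k else 0)) ∧
      ∑ k, u k = 1 := by
  classical
  set K := Fintype.card ι with hK
  set e : ι ≃ Fin K := Fintype.equivFin ι with he
  set W : ℕ → ℝ := fun j =>
    if h : j < K then (if v ∈ F (e.symm ⟨j, h⟩) then w (e.symm ⟨j, h⟩) else 0) else 0 with hW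
  have hW0 : ∀ j, 0 ≤ W j := by
    intro j
    simp only [hW]
    split
    · split
      · exact h0 _
      · exact le_refl 0
    · exact le_refl 0
  have hWe : ∀ k : ι, W (e k) = if v ∈ F k then w k else 0 := by
    intro k
    simp only [hW, (e k).isLt, dif_pos, Fin.eta, Equiv.symm_apply_apply]
  set P : ℕ → ℝ := fun m => ∑ j ∈ Finset.range m, W j with hP
  have hPstep : ∀ m, P (m + 1) = P m + W m := by
    intro m; simp only [hP, Finset.sum_range_succ]
  set Q : ℕ → ℝ := fun m => min (P m) 1 with hQ
  have hPK : P K = covS F w v := by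
    have h1 : P K = ∑ j : Fin K, W j.1 := (Fin.sum_univ_eq_sum_range (fun m => W m) K).symm
    have h2 : ∑ k : ι, W (e k).1 = ∑ j : Fin K, W j.1 := Equiv.sum_comp e (fun j : Fin K => W j.1)
    rw [h1, ← h2]
    exact (Finset.sum_congr rfl fun k _ => (hWe k)).symm ▸ rfl
  refine ⟨fun k => Q ((e k : ℕ) + 1) - Q (e k : ℕ), ?_, ?_, ?_⟩
  · intro k
    dsimp only
    have : P (e k : ℕ) ≤ P ((e k : ℕ) + 1) := by
      rw [hPstep]; linarith [hW0 (e k : ℕ)]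
    have := min_le_min this (le_refl (1:ℝ))
    simp only [hQ]; linarith
  · intro k
    dsimp only
    rw [← hWe k]
    have : Q ((e k : ℕ) + 1) ≤ Q (e k : ℕ) + W (e k : ℕ) := by
      simp only [hQ, hPstep]
      rcases le_total (P (e k : ℕ)) 1 with h | h
      · rw [min_eq_left h]
        exact le_trans (min_le_left _ _) (le_refl _)
      · rw [min_eq_right h]
        exact le_trans (min_le_right _ _) (by linarith [hW0 (e k : ℕ)])
    linarith
  · have h1 : ∑ k : ι, (Q ((e k : ℕ) + 1) - Q (e k : ℕ))
        = ∑ j : Fin K, (Q ((j : ℕ) + 1) - Q (j : ℕ)) :=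
      Equiv.sum_comp e (fun j : Fin K => Q ((j : ℕ) + 1) - Q (j : ℕ))
    rw [h1, Fin.sum_univ_eq_sum_range (fun m => Q (m + 1) - Q m) K, Finset.sum_range_sub]
    have hP0 : P 0 = 0 := by simp [hP]
    have hQ0 : Q 0 = 0 := by simp [hQ, hP0]
    have hQK : Q K = 1 := by
      simp only [hQ]
      rw [min_eq_right]
      rw [hPK]; exact hge
    rw [hQ0, hQK]; ring

lemma family_step (v : Fin n) {ι : Type} [Fintype ι] (F : ι → Finset (Fin n)) (w : ι → ℝ)
    (h0 : ∀ k, 0 ≤ w k) (h1 : ∀ k, w k ≤ 1) (hind : ∀ k, IsIndepFinset' G (F k))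
    (hge : ∀ x, 1 ≤ covS F w x) :
    ∃ (F' : ι ⊕ ι → Finset (Fin n)) (w' : ι ⊕ ι → ℝ),
      (∀ k, 0 ≤ w' k) ∧ (∀ k, w' k ≤ 1) ∧ (∀ k, IsIndepFinset' G (F' k)) ∧
      (∀ x, x ≠ v → covS F' w' x = covS F w x) ∧ covS F' w' v = 1 ∧
      ∑ k, w' k = ∑ k, w k := by
  classical
  obtain ⟨u, hu0, huW, husum⟩ := covS_step v F w h0 (hge v)
  have huw : ∀ k, u k ≤ w k := by
    intro k
    refine (huW k).trans ?_
    split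
    · exact le_refl _
    · exact h0 k
  have hu_not : ∀ k, v ∉ F k → u k = 0 := by
    intro k hk
    have h := huW k
    rw [if_neg hk] at h
    linarith [hu0 k]
  refine ⟨Sum.elim (fun k => F k \ {v}) F, Sum.elim (fun k => w k - u k) u,
    ?_, ?_, ?_, ?_, ?_, ?_⟩
  · rintro (k | k) <;> simp only [Sum.elim_inl, Sum.elim_inr]
    · linarith [huw k]
    · exact hu0 k
  · rintro (k | k) <;> simp only [Sum.elim_inl, Sum.elim_inr]
    · linarith [hu0 k, h1 k]
    · linarith [huw k, h1 k]
  · rintro (k | k) <;> simp only [Sum.elim_inl, Sum.elim_inr]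
    · intro i hi j hj
      exact hind k i (Finset.mem_sdiff.1 hi).1 j (Finset.mem_sdiff.1 hj).1
    · exact hind k
  · intro x hx
    unfold covS
    rw [Fintype.sum_sum_type]
    simp only [Sum.elim_inl, Sum.elim_inr]
    rw [← Finset.sum_add_distrib]
    apply Finset.sum_congr rfl
    intro k _
    by_cases hxk : x ∈ F k
    · erw [if_pos (Finset.mem_sdiff.2 ⟨hxk, (by simp [hx] : x ∉ ({v} : Finset (Fin n)))⟩), if_pos hxk, if_pos hxk]
      ring
    · erw [if_neg (fun h => hxk (Finset.mem_sdiff.1 h).1), if_neg hxk, if_neg hxk]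
      ring
  · unfold covS
    rw [Fintype.sum_sum_type]
    simp only [Sum.elim_inl, Sum.elim_inr]
    have h1' : ∀ k : ι, (if v ∈ F k \ {v} then w k - u k else 0) = 0 := by
      intro k
      rw [if_neg (by simp)]
    have h2' : ∀ k : ι, (if v ∈ F k then u k else 0) = u k := by
      intro k
      by_cases hk : v ∈ F k
      · rw [if_pos hk]
      · rw [if_neg hk, hu_not k hk]
    erw [Finset.sum_congr rfl (fun k _ => h1' k), Finset.sum_congr rfl (fun k _ => h2' k)]
    rw [Finset.sum_const_zero, husum]
    ring
  · rw [Fintype.sum_sum_type]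
    simp only [Sum.elim_inl, Sum.elim_inr]
    rw [Finset.sum_sub_distrib]
    ring

lemma exact_family (S : Finset (Fin n)) :
    ∀ (ι : Type) (_ : Fintype ι) (F : ι → Finset (Fin n)) (w : ι → ℝ),
      (∀ k, 0 ≤ w k) → (∀ k, w k ≤ 1) → (∀ k, IsIndepFinset' G (F k)) →
      (∀ x, 1 ≤ covS F w x) → (∀ x, x ∉ S → covS F w x = 1) →
      ∃ (K' : ℕ) (F' : Fin K' → Finset (Fin n)) (w' : Fin K' → ℝ),
        (∀ k, 0 ≤ w' k) ∧ (∀ k, w' k ≤ 1) ∧ (∀ k, IsIndepFinset' G (F' k)) ∧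
        (∀ x, covS F' w' x = 1) ∧ ∑ k, w' k = ∑ k, w k := by
  classical
  induction S using Finset.induction_on with
  | empty =>
    intro ι inst F w h0 h1 hind hge hex
    set e := Fintype.equivFin ι with he
    refine ⟨Fintype.card ι, fun j => F (e.symm j), fun j => w (e.symm j),
      fun j => h0 _, fun j => h1 _, fun j => hind _, ?_, ?_⟩
    · intro x
      have : covS (fun j => F (e.symm j)) (fun j => w (e.symm j)) x = covS F w x := by
        unfold covS
        exact Equiv.sum_comp e.symm (fun k => if x ∈ F k then w k else 0)
      rw [this]
      exact hex x (by simp)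
    · exact Equiv.sum_comp e.symm w
  | @insert a S ha ih =>
    intro ι inst F w h0 h1 hind hge hex
    obtain ⟨F', w', h0', h1', hind', hcov_ne, hcov_v, htot⟩ :=
      family_step a F w h0 h1 hind hge
    have hge' : ∀ x, 1 ≤ covS F' w' x := by
      intro x
      by_cases hx : x = a
      · subst hx; rw [hcov_v]
      · rw [hcov_ne x hx]; exact hge x
    have hex' : ∀ x, x ∉ S → covS F' w' x = 1 := by
      intro x hx
      by_cases hxa : x = a
      · subst hxa; exact hcov_v
      · rw [hcov_ne x hxa]
        exact hex x (by simp [hxa, hx])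
    obtain ⟨K', F'', w'', h0'', h1'', hind'', hcov'', htot''⟩ :=
      ih (ι ⊕ ι) inferInstance F' w' h0' h1' hind' hge' hex'
    exact ⟨K', F'', w'', h0'', h1'', hind'', hcov'', htot''.trans htot⟩

lemma indep_acyclic {I : Finset (Fin n)} (h : IsIndepFinset' G I) :
    (G.induce ((I : Set (Fin n)))).IsAcyclic := by
  intro v p hp
  cases p with
  | nil => exact hp.ne_nil rfl
  | cons hadj q => exact h v.1 v.2 _ (Subtype.coe_prop _) hadj

lemma edge_nonpos (c : Fin n → ℝ) {I : Finset (Fin n)} (h : IsIndepFinset' G I) :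
    edgeWeightSum (G.induce ((I : Set (Fin n)))) (fun v => c v.1) ≤ 0 := by
  classical
  unfold edgeWeightSum
  apply Finset.sum_nonpos
  intro e he
  exfalso
  rw [SimpleGraph.mem_edgeFinset] at he
  revert he
  refine Sym2.ind ?_ e
  intro a b he
  rw [SimpleGraph.mem_edgeSet] at he
  exact h a.1 a.2 b.1 b.2 he

lemma comp_le (c : Fin n → ℝ) (hc : ∀ i, 0 ≤ c i) {I : Finset (Fin n)}
    (h : IsIndepFinset' G I) :
    compMinSqSum (G.induce ((I : Set (Fin n)))) (fun v => c v.1) ≤ ∑ v ∈ I, c v ^ 2 := by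
  have hreach : ∀ a b : (I : Set (Fin n)),
      (G.induce ((I : Set (Fin n)))).Reachable a b → a = b := by
    intro a b hr
    obtain ⟨p⟩ := hr
    cases p with
    | nil => rfl
    | cons hadj q => exact absurd hadj (h a.1 a.2 _ (Subtype.coe_prop _))
  have hbij : Function.Bijective
      ((G.induce ((I : Set (Fin n)))).connectedComponentMk) := by
    constructor
    · intro a b hab
      exact hreach a b (SimpleGraph.ConnectedComponent.exact hab)
    · intro K
      exact K.exists_rep
  set e := Equiv.ofBijective _ hbij with he
  have key : ∀ K : (G.induce ((I : Set (Fin n)))).ConnectedComponent,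
      (⨅ v : {v // (G.induce ((I : Set (Fin n)))).connectedComponentMk v = K},
        c v.1.1) ^ 2 ≤ c (e.symm K).1 ^ 2 := by
    intro K
    have hmem : (G.induce ((I : Set (Fin n)))).connectedComponentMk (e.symm K) = K :=
      e.apply_symm_apply K
    haveI hne : Nonempty {v // (G.induce ((I : Set (Fin n)))).connectedComponentMk v = K} :=
      ⟨⟨e.symm K, hmem⟩⟩
    have h1 : (⨅ v : {v // (G.induce ((I : Set (Fin n)))).connectedComponentMk v = K},
        c v.1.1) ≤ c (e.symm K).1 :=
      ciInf_le (Set.Finite.bddBelow (Set.finite_range _))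
        (⟨e.symm K, hmem⟩ : {v // (G.induce ((I : Set (Fin n)))).connectedComponentMk v = K})
    have h2 : (0:ℝ) ≤ ⨅ v : {v // (G.induce ((I : Set (Fin n)))).connectedComponentMk v = K},
        c v.1.1 := le_ciInf fun v => hc _
    exact pow_le_pow_left₀ h2 h1 2
  unfold compMinSqSum
  refine le_trans (Finset.sum_le_sum fun K _ => key K) (le_of_eq ?_)
  refine Finset.sum_bij (fun K _ => (e.symm K).1) ?_ ?_ ?_ ?_
  · intro K _
    exact (e.symm K).2
  · intro K₁ _ K₂ _ hK
    have : e.symm K₁ = e.symm K₂ := Subtype.ext hK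
    exact e.symm.injective this
  · intro b hb
    exact ⟨e ⟨b, hb⟩, by simp, congrArg Subtype.val (e.symm_apply_apply ⟨b, hb⟩)⟩
  · intro K _
    rfl


lemma value_le (c : Fin n → ℝ) (hc : ∀ i, 0 ≤ c i) (C : FFC G)
    (hind : ∀ k, IsIndepFinset' G (C.F k)) :
    C.value c ≤ (∑ k, C.w k) * ∑ i, c i ^ 2 := by
  classical
  set a : Fin C.K → ℝ := fun k => ∑ v ∈ C.F k, c v ^ 2 with ha
  have ha0 : ∀ k, 0 ≤ a k := fun k => Finset.sum_nonneg fun v _ => sq_nonneg _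
  have hinner : ∀ k, edgeWeightSum (G.induce ((C.F k : Set (Fin n)))) (fun v => c v.1)
      + compMinSqSum (G.induce ((C.F k : Set (Fin n)))) (fun v => c v.1) ≤ a k := by
    intro k
    have h1 := edge_nonpos c (hind k)
    have h2 := comp_le c hc (hind k)
    simp only [ha]
    linarith
  have h1 : C.value c ≤ (∑ k, C.w k * Real.sqrt (a k)) ^ 2 := by
    unfold FFC.value
    apply pow_le_pow_left₀
      (Finset.sum_nonneg fun k _ => mul_nonneg (C.w_nonneg k) (Real.sqrt_nonneg _))
    exact Finset.sum_le_sum fun k _ =>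
      mul_le_mul_of_nonneg_left (Real.sqrt_le_sqrt (hinner k)) (C.w_nonneg k)
  have h2 : (∑ k, C.w k * Real.sqrt (a k)) ^ 2 ≤ (∑ k, C.w k) * ∑ k, C.w k * a k :=
    Finset.sum_sq_le_sum_mul_sum_of_sq_eq_mul _ (fun k _ => C.w_nonneg k)
      (fun k _ => mul_nonneg (C.w_nonneg k) (ha0 k))
      (fun k _ => by rw [mul_pow, Real.sq_sqrt (ha0 k)]; ring)
  have hexp : ∀ (f : Fin n → ℝ) (t : Finset (Fin n)),
      ∑ v ∈ t, f v = ∑ v : Fin n, if v ∈ t then f v else 0 := by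
    intro f t
    rw [Finset.sum_ite_mem, Finset.univ_inter]
  have h3 : ∑ k, C.w k * a k = ∑ i, c i ^ 2 := by
    calc ∑ k, C.w k * a k
        = ∑ k : Fin C.K, ∑ v : Fin n, (if v ∈ C.F k then C.w k * c v ^ 2 else 0) := by
          refine Finset.sum_congr rfl fun k _ => ?_
          rw [ha]
          dsimp only
          rw [Finset.mul_sum, hexp (fun v => C.w k * c v ^ 2) (C.F k)]
      _ = ∑ v : Fin n, ∑ k : Fin C.K, (if v ∈ C.F k then C.w k * c v ^ 2 else 0) :=
          Finset.sum_comm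
      _ = ∑ v : Fin n, c v ^ 2 * ∑ k : Fin C.K, (if v ∈ C.F k then C.w k else 0) := by
          refine Finset.sum_congr rfl fun v _ => ?_
          rw [Finset.mul_sum]
          refine Finset.sum_congr rfl fun k _ => ?_
          by_cases hv : v ∈ C.F k <;> simp [hv] <;> ring
      _ = ∑ v : Fin n, c v ^ 2 := by
          refine Finset.sum_congr rfl fun v _ => ?_
          have := C.cover v
          rw [Finset.sum_filter] at this
          rw [this, mul_one]
  calc C.value c ≤ (∑ k, C.w k * Real.sqrt (a k)) ^ 2 := h1
    _ ≤ (∑ k, C.w k) * ∑ k, C.w k * a k := h2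
    _ = (∑ k, C.w k) * ∑ i, c i ^ 2 := by rw [h3]

end Aux

section Main

open Finset

variable {n : ℕ} {G : SimpleGraph (Fin n)}

lemma indep_eq : IsIndepFinset G = IsIndepFinset' G := rfl

lemma buildFFC (c : Fin n → ℝ) (hc : ∀ i, 0 ≤ c i) (g : Finset (Fin n) → ℝ)
    (hg : IsFracColoring G g) :
    ∃ C : FFC G, C.value c ≤ (∑ I : Finset (Fin n), g I) * ∑ i, c i ^ 2 := by
  classical
  obtain ⟨hg01, hgind, hgcov⟩ := hg
  set F₀ : Finset (Fin n) → Finset (Fin n) :=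
    fun I => if IsIndepFinset' G I then I else ∅ with hF₀
  have h0 : ∀ I, 0 ≤ g I := fun I => (hg01 I).1
  have hind₀ : ∀ I, IsIndepFinset' G (F₀ I) := by
    intro I
    by_cases hI : IsIndepFinset' G I
    · simpa [hF₀, hI] using hI
    · simp only [hF₀, hI, if_false]
      intro i hi
      simp at hi
  have hge : ∀ x, 1 ≤ covS F₀ g x := by
    intro x
    refine le_trans (hgcov x) (le_of_eq ?_)
    rw [Finset.sum_filter]
    unfold covS
    refine Finset.sum_congr rfl fun I _ => ?_
    by_cases hI : IsIndepFinset' G I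
    · simp [hF₀, hI]
    · simp [hF₀, hI, hgind I hI]
  obtain ⟨K', F', w', h0', h1', hind', hcov', htot'⟩ :=
    exact_family (G := G) Finset.univ (Finset (Fin n)) inferInstance F₀ g h0
      (fun I => (hg01 I).2) hind₀ hge (fun x hx => absurd (Finset.mem_univ x) hx)
  have hcover : ∀ v : Fin n, ∑ k ∈ Finset.univ.filter (fun k => v ∈ F' k), w' k = 1 := by
    intro v
    rw [Finset.sum_filter]
    exact hcov' v
  refine ⟨⟨K', F', w', h0', h1', hcover, fun k => indep_acyclic (hind' k)⟩, ?_⟩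
  have hv := value_le c hc ⟨K', F', w', h0', h1', hcover, fun k => indep_acyclic (hind' k)⟩ hind'
  refine hv.trans (le_of_eq ?_)
  rw [show (FFC.mk K' F' w' h0' h1' hcover (fun k => indep_acyclic (hind' k))).w = w' from rfl]
  rw [htot']

lemma frac_set_nonempty :
    {x : ℝ | ∃ g : Finset (Fin n) → ℝ, IsFracColoring G g ∧
      x = ∑ I : Finset (Fin n), g I}.Nonempty := by
  classical
  refine ⟨_, fun I => if I.card = 1 then (1:ℝ) else 0, ⟨?_, ?_, ?_⟩, rfl⟩
  · intro I
    by_cases h : I.card = 1 <;> simp [h]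
  · intro I hI
    by_cases h : I.card = 1
    · exfalso
      apply hI
      obtain ⟨a, rfl⟩ := Finset.card_eq_one.1 h
      intro i hi j hj
      simp only [Finset.mem_singleton] at hi hj
      subst hi; subst hj
      exact G.irrefl
    · simp [h]
  · intro v
    rw [Finset.sum_filter]
    have hstep : ∀ I : Finset (Fin n),
        (if v ∈ I then (if I.card = 1 then (1:ℝ) else 0) else 0)
          = if I = {v} then 1 else 0 := by
      intro I
      by_cases hIv : I = {v}
      · subst hIv; simp
      · rw [if_neg hIv]
        by_cases hv : v ∈ I
        · rw [if_pos hv, if_neg]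
          intro hcard
          obtain ⟨a, rfl⟩ := Finset.card_eq_one.1 hcard
          simp only [Finset.mem_singleton] at hv
          exact hIv (by rw [hv])
        · rw [if_neg hv]
    rw [Finset.sum_congr rfl fun I _ => hstep I]
    rw [Finset.sum_ite_eq' Finset.univ ({v} : Finset (Fin n)) (fun _ => (1:ℝ))]
    simp

end Main

theorem DFFC_le_fracChromatic_mul {n : ℕ} (G : SimpleGraph (Fin n))
    (c : Fin n → ℝ) (hc : ∀ i, 0 ≤ c i) :
    DFFC G c ≤ fracChromatic G * ∑ i, c i ^ 2 := by
  classical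
  have hA0 : (0:ℝ) ≤ ∑ i, c i ^ 2 := Finset.sum_nonneg fun i _ => sq_nonneg _
  have hbdd : BddBelow (Set.range fun C : FFC G => C.value c) := by
    refine ⟨0, ?_⟩
    rintro x ⟨C, rfl⟩
    unfold FFC.value
    exact sq_nonneg _
  have key : ∀ x ∈ {x : ℝ | ∃ g : Finset (Fin n) → ℝ, IsFracColoring G g ∧
      x = ∑ I : Finset (Fin n), g I}, DFFC G c ≤ x * ∑ i, c i ^ 2 := by
    rintro x ⟨g, hg, rfl⟩
    obtain ⟨C, hval⟩ := buildFFC c hc g hg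
    exact le_trans (csInf_le hbdd ⟨C, rfl⟩) hval
  have hS := frac_set_nonempty (n := n) (G := G)
  rcases eq_or_lt_of_le hA0 with h0 | hpos
  · obtain ⟨x₀, hx₀⟩ := hS
    have := key x₀ hx₀
    rw [← h0] at this ⊢
    simpa using this
  · have hdiv : DFFC G c / (∑ i, c i ^ 2) ≤ fracChromatic G := by
      refine le_csInf hS ?_
      intro x hx
      rw [div_le_iff₀ hpos]
      exact key x hx
    calc DFFC G c = DFFC G c / (∑ i, c i ^ 2) * (∑ i, c i ^ 2) := by
          field_simp
      _ ≤ fracChromatic G * ∑ i, c i ^ 2 := by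
          exact mul_le_mul_of_nonneg_right hdiv hA0
end

section
/- Let G be a tree on [n], rooted at vertex n, Ordered (j is a descendant of i only if j < i), with parent map p and S_i := {i+1,…,n} ∖ {p_i}. Let X be G-dependent with values in Ω = Ω₁×⋯×Ωₙ. Then for every i ∈ [n−1], every x ∈ Ω, and every x'_i ∈ Ω_i, there exists a coupling, i.e., a pair of Ω-valued random vectors (Y, Z) on a common probability space, such that: (i) the law of Y equals the conditional law of X given X_{[i]} = x_{[i]}; (ii) the law of Z equals the conditional law of X given X_{[i−1]} = x_{[i−1]} and X_i = x'_i; (iii) Y_{[i]} = x_{[i]} and Z_{[i]} = (x₁,…,x_{i−1}, x'_i); and (iv) Y_j = Z_j for every j ∈ S_i, so that Y and Z can differ only in coordinates i and p_i. -/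
/-- A bundled measurable space. -/
structure BundledMeasSpace where
  /-- the underlying type -/
  carrier : Type
  [inst : MeasurableSpace carrier]

attribute [instance] BundledMeasSpace.inst


open MeasureTheory ProbabilityTheory BigOperators

/-- `p` is the parent map of the tree `G` on `{0, …, n-1}`, rooted at the last vertex
`n-1`, in the Ordered sense: every non-root vertex `i` is adjacent to its parent `p i`
and satisfies `i < p i` (descendants have smaller labels). -/
def IsOrderedParentMap {n : ℕ} (G : SimpleGraph (Fin n)) (p : Fin n → Fin n) : Prop :=
  ∀ i : Fin n, (i : ℕ) + 1 < n → G.Adj i (p i) ∧ i < p i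

/-- `j` belongs to the subtree rooted at `i` (i.e. `j` is `i` or a descendant of `i`)
for the parent map `p`: iterating `p` from `j` reaches `i`. -/
def InSubtree {n : ℕ} (p : Fin n → Fin n) (i j : Fin n) : Prop :=
  ∃ k : ℕ, p^[k] j = i

/-- A coupling `(Y, Z)` on a common probability space whose marginals are the conditional
laws of `X` given `X_{[i]} = x_{[i]}` and given `X_{[i-1]} = x_{[i-1]}, X_i = x'`,
with `Y_{[i]} = x_{[i]}`, `Z_{[i]} = (x_{[i-1]}, x')`, and `Y_j = Z_j` for every
`j ∈ S_i = {i+1, …, n} \ {p_i}`, so `Y` and `Z` differ only in coordinates `i`, `p_i`. -/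
structure CouplingWitness {n : ℕ} {Ω : Fin n → Type*} [∀ i, MeasurableSpace (Ω i)]
    {α : Type*} [MeasurableSpace α] (μ : Measure α)
    (X : ∀ i, α → Ω i) (p : Fin n → Fin n) (v : Fin n)
    (x : ∀ j, Ω j) (x' : Ω v) where
  S : BundledMeasSpace
  ν : Measure S.carrier
  prob : IsProbabilityMeasure ν
  Y : ∀ j, S.carrier → Ω j
  Z : ∀ j, S.carrier → Ω j
  measY : ∀ j, Measurable (Y j)
  measZ : ∀ j, Measurable (Z j)
  lawY : ν.map (fun b j => Y j b)
    = (μ[|{a | ∀ j, j ≤ v → X j a = x j}]).map (fun a j => X j a)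
  lawZ : ν.map (fun b j => Z j b)
    = (μ[|{a | (∀ j, j < v → X j a = x j) ∧ X v a = x'}]).map (fun a j => X j a)
  eqY : ∀ b, ∀ j, j ≤ v → Y j b = x j
  eqZ_lt : ∀ b, ∀ j, j < v → Z j b = x j
  eqZ_v : ∀ b, Z v b = x'
  agree : ∀ b, ∀ j, v < j → j ≠ p v → Y j b = Z j b
  differ_only : ∀ b, ∀ j, j ≠ v → j ≠ p v → Y j b = Z j b

/-- j is v or a descendant of v with the whole chain below v. -/
def Desc {n : ℕ} (p : Fin n → Fin n) (v : Fin n) (j : Fin n) : Prop :=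
  ∃ k : ℕ, p^[k] j = v ∧ ∀ m < k, p^[m] j < v

lemma desc_le {n : ℕ} {p : Fin n → Fin n} {v j : Fin n} (h : Desc p v j) : j ≤ v := by
  obtain ⟨k, hk, hm⟩ := h
  rcases Nat.eq_zero_or_pos k with rfl | hk0
  · exact le_of_eq hk
  · have := hm 0 hk0
    simpa using this.le

lemma desc_self {n : ℕ} (p : Fin n → Fin n) (v : Fin n) : Desc p v v :=
  ⟨0, rfl, fun m hm => absurd hm (Nat.not_lt_zero m)⟩

lemma desc_parent {n : ℕ} {p : Fin n → Fin n} {v j : Fin n} (h : Desc p v j) (hj : j ≠ v) :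
    Desc p v (p j) := by
  obtain ⟨k, hk, hm⟩ := h
  rcases Nat.eq_zero_or_pos k with rfl | hk0
  · exact absurd hk hj
  · refine ⟨k - 1, ?_, ?_⟩
    · rw [← Function.iterate_succ_apply]
      rwa [Nat.succ_eq_add_one, Nat.sub_add_cancel hk0]
    · intro m hm'
      rw [← Function.iterate_succ_apply]
      exact hm (m + 1) (by omega)

lemma desc_of_parent {n : ℕ} {p : Fin n → Fin n} {v j : Fin n} (hjv : j < v)
    (h : Desc p v (p j)) : Desc p v j := by
  obtain ⟨k, hk, hm⟩ := h
  refine ⟨k + 1, by rwa [Function.iterate_succ_apply], ?_⟩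
  intro m hm'
  rcases Nat.eq_zero_or_pos m with rfl | hm0
  · simpa using hjv
  · obtain ⟨m', rfl⟩ : ∃ m', m = m' + 1 := ⟨m - 1, by omega⟩
    rw [Function.iterate_succ_apply]
    exact hm m' (by omega)

lemma tree_adj_iff {n : ℕ} {G : SimpleGraph (Fin n)} (hG : G.IsTree)
    {p : Fin n → Fin n} (hp : IsOrderedParentMap G p) {a b : Fin n} (hab : a < b) :
    G.Adj a b ↔ b = p a := by
  have hn2 : 2 ≤ n := by
    have h1 : (a : ℕ) < (b : ℕ) := hab
    have := b.2; omega
  have ha : (a : ℕ) + 1 < n := by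
    have h1 : (a : ℕ) < (b : ℕ) := hab
    have := b.2; omega
  classical
  haveI : DecidableRel G.Adj := Classical.decRel _
  constructor
  · intro hadj
    -- counting argument
    set E : Finset (Fin n) := Finset.univ.filter (fun i => (i : ℕ) + 1 < n) with hE
    have hmemE : ∀ i : Fin n, i ∈ E ↔ (i : ℕ) + 1 < n := by
      intro i; simp [hE]
    have hinj : Set.InjOn (fun i => s(i, p i)) E := by
      intro i hi j hj hij
      simp only [Sym2.eq_iff] at hij
      rcases hij with ⟨h1, _⟩ | ⟨h1, h2⟩
      · exact h1
      · exfalso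
        have hi' := (hp i ((hmemE i).1 (Finset.mem_coe.1 hi))).2
        have hj' := (hp j ((hmemE j).1 (Finset.mem_coe.1 hj))).2
        rw [h2] at hi'
        rw [← h1] at hj'
        exact absurd (hi'.trans hj') (lt_irrefl _)
    have hsub : Finset.image (fun i => s(i, p i)) E ⊆ G.edgeFinset := by
      intro e he
      rcases Finset.mem_image.1 he with ⟨i, hi, rfl⟩
      exact SimpleGraph.mem_edgeFinset.2 (hp i ((hmemE i).1 hi)).1
    have hcardE : E.card = n - 1 := by
      have : E = Finset.univ.erase ⟨n - 1, by omega⟩ := by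
        ext i
        simp only [hmemE, Finset.mem_erase, Finset.mem_univ, and_true]
        constructor
        · intro h hne
          rw [hne] at h; simp at h; omega
        · intro h
          have : (i : ℕ) ≠ n - 1 := fun hc => h (Fin.ext hc)
          have := i.2; omega
      rw [this, Finset.card_erase_of_mem (Finset.mem_univ _), Finset.card_univ,
        Fintype.card_fin]
    have hcard : (Finset.image (fun i => s(i, p i)) E).card = G.edgeFinset.card := by
      have h := hG.card_edgeFinset
      rw [Fintype.card_fin] at h
      rw [Finset.card_image_of_injOn hinj, hcardE]
      omega
    have heq : Finset.image (fun i => s(i, p i)) E = G.edgeFinset :=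
      Finset.eq_of_subset_of_card_le hsub (le_of_eq hcard.symm)
    have hmem : s(a, b) ∈ Finset.image (fun i => s(i, p i)) E := by
      rw [heq]; exact SimpleGraph.mem_edgeFinset.2 hadj
    rcases Finset.mem_image.1 hmem with ⟨i, hi, hie⟩
    rw [Sym2.eq_iff] at hie
    rcases hie with ⟨rfl, h2⟩ | ⟨rfl, h2⟩
    · exact h2.symm
    · exfalso
      have := (hp i ((hmemE i).1 hi)).2
      rw [h2] at this
      exact absurd (hab.trans this) (lt_irrefl _)
  · rintro rfl
    exact (hp a ha).1

lemma desc_not_adj {n : ℕ} {G : SimpleGraph (Fin n)} (hG : G.IsTree)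
    {p : Fin n → Fin n} (hp : IsOrderedParentMap G p) {v : Fin n} (hv : (v : ℕ) + 1 < n)
    {i j : Fin n} (hi : Desc p v i) (hj : ¬ Desc p v j) (hjq : j ≠ p v) :
    ¬ G.Adj i j := by
  intro hadj
  rcases lt_trichotomy i j with hij | rfl | hij
  · have hb : j = p i := (tree_adj_iff hG hp hij).1 hadj
    rcases eq_or_ne i v with rfl | hiv
    · exact hjq hb
    · exact hj (hb ▸ desc_parent hi hiv)
  · exact hj hi
  · have hb : i = p j := (tree_adj_iff hG hp hij).1 hadj.symm
    have hjv : j < v := lt_of_lt_of_le hij (desc_le hi)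
    exact hj (desc_of_parent hjv (hb ▸ hi))

lemma measurable_update_pair {δ : Type*} {π : δ → Type*} [DecidableEq δ]
    [∀ i, MeasurableSpace (π i)] (i : δ) {β : Type*} [MeasurableSpace β]
    {h : β → ∀ j, π j} (hh : Measurable h) :
    Measurable (fun z : β × π i => Function.update (h z.1) i z.2) := by
  apply measurable_pi_lambda
  intro j
  by_cases hj : j = i
  · subst hj
    simp only [Function.update_self]
    exact measurable_snd
  · simp only [Function.update_of_ne hj]
    exact (measurable_pi_apply j).comp (hh.comp measurable_fst)

theorem coupling_exists {n : ℕ} {Ω : Fin n → Type*}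
    [∀ i, MeasurableSpace (Ω i)] [∀ i, TopologicalSpace (Ω i)]
    [∀ i, PolishSpace (Ω i)] [∀ i, BorelSpace (Ω i)]
    [∀ i, MeasurableSingletonClass (Ω i)]
    {α : Type*} [MeasurableSpace α] (μ : Measure α) [IsProbabilityMeasure μ]
    (G : SimpleGraph (Fin n)) (hG : G.IsTree)
    (p : Fin n → Fin n) (hp : IsOrderedParentMap G p)
    (X : ∀ i, α → Ω i) (hX : ∀ i, Measurable (X i))
    (hdep : GDependent μ G X)
    (v : Fin n) (hv : (v : ℕ) + 1 < n)
    (x : ∀ j, Ω j) (x' : Ω v)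
    (hA : μ {a | ∀ j, j ≤ v → X j a = x j} ≠ 0)
    (hA' : μ {a | (∀ j, j < v → X j a = x j) ∧ X v a = x'} ≠ 0) :
    Nonempty (CouplingWitness μ X p v x x') := by
  classical
  obtain ⟨hadj, hvq⟩ := hp v hv
  -- notation
  set A : Set α := {a | ∀ j, j ≤ v → X j a = x j} with hAdef
  set A' : Set α := {a | (∀ j, j < v → X j a = x j) ∧ X v a = x'} with hA'def
  have hqv : v < p v := hvq
  have hvne : v ≠ p v := ne_of_lt hqv
  -- measurability of A, A'
  have hmA : MeasurableSet A := by
    have : A = ⋂ j, ⋂ (_ : j ≤ v), (X j) ⁻¹' {x j} := by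
      ext a; simp [hAdef, Set.mem_iInter]
    rw [this]
    exact MeasurableSet.iInter fun j => MeasurableSet.iInter fun _ =>
      (hX j) (measurableSet_singleton _)
  have hmA' : MeasurableSet A' := by
    have : A' = (⋂ j, ⋂ (_ : j < v), (X j) ⁻¹' {x j}) ∩ (X v) ⁻¹' {x'} := by
      ext a; simp [hA'def, Set.mem_iInter]
    rw [this]
    exact ((MeasurableSet.iInter fun j => MeasurableSet.iInter fun _ =>
      (hX j) (measurableSet_singleton _))).inter ((hX v) (measurableSet_singleton _))
  -- finsets
  set DF : Finset (Fin n) := Finset.univ.filter (fun j => Desc p v j) with hDF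
  set SF : Finset (Fin n) := Finset.univ.filter (fun j => ¬ Desc p v j ∧ j ≠ p v) with hSF
  have hmemDF : ∀ j, j ∈ DF ↔ Desc p v j := by intro j; simp [hDF]
  have hmemSF : ∀ j, j ∈ SF ↔ ¬ Desc p v j ∧ j ≠ p v := by intro j; simp [hSF]
  have hdisj : Disjoint DF SF := by
    rw [Finset.disjoint_left]
    intro j hjD hjS
    exact ((hmemSF j).1 hjS).1 ((hmemDF j).1 hjD)
  have hnadj : ∀ i ∈ DF, ∀ j ∈ SF, ¬ G.Adj i j := by
    intro i hi j hj
    exact desc_not_adj hG hp hv ((hmemDF i).1 hi) ((hmemSF j).1 hj).1 ((hmemSF j).1 hj).2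
  -- random vectors
  set XD : α → (∀ i : DF, Ω i.1) := fun a => fun i : DF => X i.1 a with hXD
  set XS : α → (∀ i : SF, Ω i.1) := fun a => fun i : SF => X i.1 a with hXS
  have hIndep := (indepFun_iff_measure_inter_preimage_eq_mul.1 (hdep DF SF hdisj hnadj))
  -- the function F keeping only coordinates above v other than p v
  set F : α → ∀ j, Ω j := fun a j => if v < j ∧ j ≠ p v then X j a else x j with hFdef
  have hmF : Measurable F := by
    apply measurable_pi_lambda
    intro j
    by_cases h : v < j ∧ j ≠ p v
    · simpa only [hFdef, if_pos h] using hX j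
    · simp only [hFdef, if_neg h]
      exact measurable_const
  have hSmem : ∀ j : Fin n, v < j → j ≠ p v → j ∈ SF := by
    intro j h1 h2
    exact (hmemSF j).2 ⟨fun hd => absurd (desc_le hd) (not_le.2 h1), h2⟩
  set Φ : (∀ i : SF, Ω i.1) → ∀ j, Ω j :=
    fun w j => if h : v < j ∧ j ≠ p v then w ⟨j, hSmem j h.1 h.2⟩ else x j with hΦdef
  have hmΦ : Measurable Φ := by
    apply measurable_pi_lambda
    intro j
    by_cases h : v < j ∧ j ≠ p v
    · simp only [hΦdef, dif_pos h]
      exact measurable_pi_apply _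
    · simp only [hΦdef, dif_neg h]
      exact measurable_const
  have hΦF : ∀ a, Φ (XS a) = F a := by
    intro a
    funext j
    by_cases h : v < j ∧ j ≠ p v
    · simp only [hΦdef, hFdef, dif_pos h, if_pos h, hXS]
    · simp only [hΦdef, hFdef, dif_neg h, if_neg h]
  -- key sets
  set y : ∀ j, Ω j := Function.update x v x' with hy
  set sD : Set (∀ i : DF, Ω i.1) := {w | ∀ i, w i = x i.1} with hsD
  set sD' : Set (∀ i : DF, Ω i.1) := {w | ∀ i, w i = y i.1} with hsD'
  set tR : Set (∀ i : SF, Ω i.1) := {w | ∀ i, i.1 ≤ v → w i = x i.1} with htR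
  have hmsD : MeasurableSet sD := by
    have : sD = ⋂ i : DF, (fun w : ∀ i : DF, Ω i.1 => w i) ⁻¹' {x i.1} := by
      ext w; simp [hsD, Set.mem_iInter]
    rw [this]
    exact MeasurableSet.iInter fun i => (measurable_pi_apply i) (measurableSet_singleton _)
  have hmsD' : MeasurableSet sD' := by
    have : sD' = ⋂ i : DF, (fun w : ∀ i : DF, Ω i.1 => w i) ⁻¹' {y i.1} := by
      ext w; simp [hsD', Set.mem_iInter]
    rw [this]
    exact MeasurableSet.iInter fun i => (measurable_pi_apply i) (measurableSet_singleton _)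
  have hmtR : MeasurableSet tR := by
    have : tR = ⋂ i : SF, ⋂ (_ : i.1 ≤ v), (fun w : ∀ i : SF, Ω i.1 => w i) ⁻¹' {x i.1} := by
      ext w; simp [htR, Set.mem_iInter]
    rw [this]
    exact MeasurableSet.iInter fun i => MeasurableSet.iInter fun _ =>
      (measurable_pi_apply i) (measurableSet_singleton _)
  -- set identities
  have heA : A = XD ⁻¹' sD ∩ XS ⁻¹' tR := by
    ext a
    simp only [hAdef, Set.mem_setOf_eq, Set.mem_inter_iff, Set.mem_preimage, hsD, htR, hXD, hXS]
    constructor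
    · intro h
      exact ⟨fun i => h i.1 (desc_le ((hmemDF i.1).1 i.2)), fun i hi => h i.1 hi⟩
    · rintro ⟨h1, h2⟩ j hj
      by_cases hd : Desc p v j
      · exact h1 ⟨j, (hmemDF j).2 hd⟩
      · have hjq : j ≠ p v := fun hc => absurd (hc ▸ hj) (not_le.2 hqv)
        exact h2 ⟨j, (hmemSF j).2 ⟨hd, hjq⟩⟩ hj
  have heA' : A' = XD ⁻¹' sD' ∩ XS ⁻¹' tR := by
    ext a
    simp only [hA'def, Set.mem_setOf_eq, Set.mem_inter_iff, Set.mem_preimage, hsD', htR, hXD, hXS]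
    constructor
    · rintro ⟨h1, h2⟩
      constructor
      · intro i
        rcases eq_or_ne i.1 v with hev | hev
        · rw [hev, hy, Function.update_self, h2] -- X i.1 a with i.1 = v : needs care
        · have : i.1 < v := lt_of_le_of_ne (desc_le ((hmemDF i.1).1 i.2)) hev
          rw [hy, Function.update_of_ne hev]
          exact h1 i.1 this
      · intro i hi
        have hiv : i.1 ≠ v := ((hmemSF i.1).1 i.2).1 ∘ (fun hc => hc ▸ desc_self p v)
        exact h1 i.1 (lt_of_le_of_ne hi hiv)
    · rintro ⟨h1, h2⟩
      constructor
      · intro j hj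
        by_cases hd : Desc p v j
        · have := h1 ⟨j, (hmemDF j).2 hd⟩
          rwa [hy, Function.update_of_ne (ne_of_lt hj)] at this
        · have hjq : j ≠ p v := fun hc => absurd (hc ▸ hj) (not_lt.2 (le_of_lt hqv))
          exact h2 ⟨j, (hmemSF j).2 ⟨hd, hjq⟩⟩ (le_of_lt hj)
      · have := h1 ⟨v, (hmemDF v).2 (desc_self p v)⟩
        rwa [hy, Function.update_self] at this
  -- measure factorization
  have hfac : ∀ (s : Set (∀ i : DF, Ω i.1)) (t : Set (∀ i : SF, Ω i.1)),
      MeasurableSet s → MeasurableSet t →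
      μ (XD ⁻¹' s ∩ XS ⁻¹' t) = μ (XD ⁻¹' s) * μ (XS ⁻¹' t) := fun s t hs ht =>
    hIndep s t hs ht
  set c := μ (XD ⁻¹' sD) with hc
  set c' := μ (XD ⁻¹' sD') with hc'
  set r := μ (XS ⁻¹' tR) with hr
  have hAcr : μ A = c * r := by rw [heA]; exact hfac _ _ hmsD hmtR
  have hA'cr : μ A' = c' * r := by rw [heA']; exact hfac _ _ hmsD' hmtR
  have hc0 : c ≠ 0 := fun h => hA (by rw [hAcr, h, zero_mul])
  have hc'0 : c' ≠ 0 := fun h => hA' (by rw [hA'cr, h, zero_mul])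
  have hcT : c ≠ ⊤ := measure_ne_top μ _
  have hc'T : c' ≠ ⊤ := measure_ne_top μ _
  -- the laws of F agree under the two conditionings
  have hL : (μ[|A]).map F = (μ[|A']).map F := by
    ext B hB
    have hpre : XS ⁻¹' (Φ ⁻¹' B) = F ⁻¹' B := by
      ext a; simp only [Set.mem_preimage, hΦF a]
    have key : ∀ (s : Set (∀ i : DF, Ω i.1)), MeasurableSet s →
        μ (XD ⁻¹' s ∩ XS ⁻¹' tR ∩ F ⁻¹' B)
          = μ (XD ⁻¹' s) * μ (XS ⁻¹' (tR ∩ Φ ⁻¹' B)) := by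
      intro s hs
      rw [← hpre, Set.inter_assoc, ← Set.preimage_inter]
      exact hfac _ _ hs (hmtR.inter (hmΦ hB))
    have hgen : ∀ (d : ENNReal), d ≠ 0 → d ≠ ⊤ →
        (d * r)⁻¹ * (d * μ (XS ⁻¹' (tR ∩ Φ ⁻¹' B)))
          = r⁻¹ * μ (XS ⁻¹' (tR ∩ Φ ⁻¹' B)) := by
      intro d hd0 hdT
      rw [ENNReal.mul_inv (Or.inl hd0) (Or.inl hdT), mul_mul_mul_comm,
        ENNReal.inv_mul_cancel hd0 hdT, one_mul]
    rw [Measure.map_apply hmF hB, Measure.map_apply hmF hB, cond_apply hmA, cond_apply hmA',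
      hAcr, hA'cr, heA, key _ hmsD, heA', key _ hmsD', ← hc, ← hc', hgen c hc0 hcT,
      hgen c' hc'0 hc'T]
  -- conditional measures are probability measures
  haveI hPA : IsProbabilityMeasure (μ[|A]) := cond_isProbabilityMeasure hA
  haveI hPA' : IsProbabilityMeasure (μ[|A']) := cond_isProbabilityMeasure hA'
  haveI : Nonempty (Ω (p v)) := ⟨x (p v)⟩
  haveI : Nonempty (∀ j, Ω j) := ⟨x⟩
  set ρ1 : Measure ((∀ j, Ω j) × Ω (p v)) := (μ[|A]).map (fun a => (F a, X (p v) a)) with hρ1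
  set ρ2 : Measure ((∀ j, Ω j) × Ω (p v)) := (μ[|A']).map (fun a => (F a, X (p v) a)) with hρ2
  haveI : IsProbabilityMeasure ρ1 :=
    Measure.isProbabilityMeasure_map ((hmF.prodMk (hX (p v))).aemeasurable)
  haveI : IsProbabilityMeasure ρ2 :=
    Measure.isProbabilityMeasure_map ((hmF.prodMk (hX (p v))).aemeasurable)
  have hfst : ρ1.fst = ρ2.fst := by
    rw [hρ1, hρ2, Measure.fst_map_prodMk (hX (p v)), Measure.fst_map_prodMk (hX (p v)), hL]
  set ν0 : Measure ((∀ j, Ω j) × (Ω (p v) × Ω (p v))) :=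
    ρ1.fst ⊗ₘ (ρ1.condKernel ×ₖ ρ2.condKernel) with hν0
  haveI : IsProbabilityMeasure ν0 := by rw [hν0]; infer_instance
  have hmpr1 : Measurable (fun z : (∀ j, Ω j) × (Ω (p v) × Ω (p v)) => (z.1, z.2.1)) :=
    measurable_fst.prodMk (measurable_fst.comp measurable_snd)
  have hmpr2 : Measurable (fun z : (∀ j, Ω j) × (Ω (p v) × Ω (p v)) => (z.1, z.2.2)) :=
    measurable_fst.prodMk (measurable_snd.comp measurable_snd)
  have hM1 : ν0.map (fun z => (z.1, z.2.1)) = ρ1 := by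
    ext s hs
    rw [Measure.map_apply hmpr1 hs, hν0, Measure.compProd_apply (hmpr1 hs)]
    have hptw : ∀ w, (ρ1.condKernel ×ₖ ρ2.condKernel) w
        (Prod.mk w ⁻¹' ((fun z : (∀ j, Ω j) × (Ω (p v) × Ω (p v)) => (z.1, z.2.1)) ⁻¹' s))
        = ρ1.condKernel w (Prod.mk w ⁻¹' s) := by
      intro w
      have hset : (Prod.mk w ⁻¹' ((fun z : (∀ j, Ω j) × (Ω (p v) × Ω (p v)) =>
          (z.1, z.2.1)) ⁻¹' s)) = {u : Ω (p v) × Ω (p v) | u.1 ∈ Prod.mk w ⁻¹' s} := rfl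
      rw [hset, ← Kernel.fst_apply' _ _ (measurable_prodMk_left hs), Kernel.fst_prod]
    simp_rw [hptw]
    rw [← Measure.compProd_apply hs, ρ1.disintegrate ρ1.condKernel]
  have hM2 : ν0.map (fun z => (z.1, z.2.2)) = ρ2 := by
    ext s hs
    rw [Measure.map_apply hmpr2 hs, hν0, Measure.compProd_apply (hmpr2 hs)]
    have hptw : ∀ w, (ρ1.condKernel ×ₖ ρ2.condKernel) w
        (Prod.mk w ⁻¹' ((fun z : (∀ j, Ω j) × (Ω (p v) × Ω (p v)) => (z.1, z.2.2)) ⁻¹' s))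
        = ρ2.condKernel w (Prod.mk w ⁻¹' s) := by
      intro w
      have hset : (Prod.mk w ⁻¹' ((fun z : (∀ j, Ω j) × (Ω (p v) × Ω (p v)) =>
          (z.1, z.2.2)) ⁻¹' s)) = (Prod.snd ⁻¹' (Prod.mk w ⁻¹' s) : Set (Ω (p v) × Ω (p v))) := rfl
      rw [hset, ← Kernel.snd_apply' _ _ (measurable_prodMk_left hs), Kernel.snd_prod]
    simp_rw [hptw]
    rw [← Measure.compProd_apply hs, hfst, ρ2.disintegrate ρ2.condKernel]
  -- embed into the reals
  obtain ⟨f, hf⟩ :=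
    MeasureTheory.exists_measurableEmbedding_real ((∀ j, Ω j) × (Ω (p v) × Ω (p v)))
  obtain ⟨g, hg, hgf⟩ := hf.exists_measurable_extend (measurable_id)
    (fun _ => ⟨(x, x (p v), x (p v))⟩)
  -- building blocks for Y and Z
  set base : (∀ j, Ω j) → (∀ j, Ω j) := fun w j => if j ≤ v then x j else w j with hbase
  have hmbase : Measurable base := by
    apply measurable_pi_lambda
    intro j
    by_cases h : j ≤ v
    · simp only [hbase, if_pos h]; exact measurable_const
    · simp only [hbase, if_neg h]; exact measurable_pi_apply j
  have hmupdv : Measurable (fun w : ∀ j, Ω j => Function.update w v x') := by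
    apply measurable_pi_lambda
    intro j
    by_cases hj : j = v
    · subst hj; simp only [Function.update_self]; exact measurable_const
    · simp only [Function.update_of_ne hj]; exact measurable_pi_apply j
  set H1 : ((∀ j, Ω j) × Ω (p v)) → (∀ j, Ω j) :=
    fun z => Function.update (base z.1) (p v) z.2 with hH1
  set H2 : ((∀ j, Ω j) × Ω (p v)) → (∀ j, Ω j) :=
    fun z => Function.update (Function.update (base z.1) v x') (p v) z.2 with hH2
  have hmH1 : Measurable H1 := measurable_update_pair (p v) hmbase
  have hmH2 : Measurable H2 := measurable_update_pair (p v) (hmupdv.comp hmbase)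
  have hH1F : ∀ a ∈ A, H1 (F a, X (p v) a) = fun j => X j a := by
    intro a ha
    funext j
    by_cases hj : j = p v
    · subst hj
      simp only [hH1, Function.update_self]
    · simp only [hH1, Function.update_of_ne hj, hbase]
      by_cases h2 : j ≤ v
      · simp only [if_pos h2]
        exact (ha j h2).symm
      · simp only [if_neg h2, hFdef, if_pos (And.intro (not_le.1 h2) hj)]
  have hH2F : ∀ a ∈ A', H2 (F a, X (p v) a) = fun j => X j a := by
    intro a ha
    funext j
    by_cases hj : j = p v
    · subst hj
      simp only [hH2, Function.update_self]
    · by_cases hjv2 : j = v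
      · subst hjv2
        simp only [hH2, Function.update_of_ne hj, Function.update_self]
        exact ha.2.symm
      · simp only [hH2, Function.update_of_ne hj, Function.update_of_ne hjv2, hbase]
        by_cases h2 : j ≤ v
        · simp only [if_pos h2]
          exact (ha.1 j (lt_of_le_of_ne h2 hjv2)).symm
        · simp only [if_neg h2, hFdef, if_pos (And.intro (not_le.1 h2) hj)]
  have haeA : ∀ᵐ a ∂(μ[|A]), a ∈ A := by
    have h0 : (μ[|A]) Aᶜ = 0 := by
      rw [cond_apply hmA]
      simp [Set.inter_compl_self]
    rw [ae_iff]
    exact h0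
  have haeA' : ∀ᵐ a ∂(μ[|A']), a ∈ A' := by
    have h0 : (μ[|A']) A'ᶜ = 0 := by
      rw [cond_apply hmA']
      simp [Set.inter_compl_self]
    rw [ae_iff]
    exact h0
  -- the coupled random vectors
  set Yb : ℝ → ∀ j, Ω j := fun b => H1 ((g b).1, (g b).2.1) with hYb
  set Zb : ℝ → ∀ j, Ω j := fun b => H2 ((g b).1, (g b).2.2) with hZb
  have hmYb : Measurable Yb :=
    hmH1.comp ((measurable_fst.comp hg).prodMk
      (measurable_fst.comp (measurable_snd.comp hg)))
  have hmZb : Measurable Zb :=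
    hmH2.comp ((measurable_fst.comp hg).prodMk
      (measurable_snd.comp (measurable_snd.comp hg)))
  set ν : Measure ℝ := ν0.map f with hν
  haveI hνprob : IsProbabilityMeasure ν := Measure.isProbabilityMeasure_map hf.measurable.aemeasurable
  -- the laws
  have hlawY : ν.map Yb = (μ[|A]).map (fun a j => X j a) := by
    rw [hν, Measure.map_map hmYb hf.measurable]
    have h2 : Yb ∘ f = H1 ∘ (fun z : (∀ j, Ω j) × (Ω (p v) × Ω (p v)) => (z.1, z.2.1)) := by
      funext z
      show Yb (f z) = _
      rw [hYb]
      simp only [Function.comp_apply]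
      rw [show g (f z) = z from congrFun hgf z]
    rw [h2, ← Measure.map_map hmH1 hmpr1, hM1, hρ1, Measure.map_map hmH1 (hmF.prodMk (hX (p v)))]
    refine Measure.map_congr (haeA.mono fun a ha => ?_)
    exact hH1F a ha
  have hlawZ : ν.map Zb = (μ[|A']).map (fun a j => X j a) := by
    rw [hν, Measure.map_map hmZb hf.measurable]
    have h2 : Zb ∘ f = H2 ∘ (fun z : (∀ j, Ω j) × (Ω (p v) × Ω (p v)) => (z.1, z.2.2)) := by
      funext z
      show Zb (f z) = _
      rw [hZb]
      simp only [Function.comp_apply]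
      rw [show g (f z) = z from congrFun hgf z]
    rw [h2, ← Measure.map_map hmH2 hmpr2, hM2, hρ2, Measure.map_map hmH2 (hmF.prodMk (hX (p v)))]
    refine Measure.map_congr (haeA'.mono fun a ha => ?_)
    exact hH2F a ha
  -- assemble the witness
  refine ⟨⟨⟨ℝ⟩, ν, hνprob, fun j b => Yb b j, fun j b => Zb b j,
    fun j => (measurable_pi_apply j).comp hmYb,
    fun j => (measurable_pi_apply j).comp hmZb,
    ?_, ?_, ?_, ?_, ?_, ?_, ?_⟩⟩
  · exact hlawY
  · exact hlawZ
  · intro b j hj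
    have hjq : j ≠ p v := ne_of_lt (lt_of_le_of_lt hj hqv)
    simp only [hYb, hH1, Function.update_of_ne hjq, hbase, if_pos hj]
  · intro b j hj
    have hjq : j ≠ p v := ne_of_lt (lt_of_lt_of_le (lt_of_lt_of_le hj (le_of_lt hqv)) le_rfl)
    simp only [hZb, hH2, Function.update_of_ne hjq, Function.update_of_ne (ne_of_lt hj),
      hbase, if_pos (le_of_lt hj)]
  · intro b
    simp only [hZb, hH2, Function.update_of_ne hvne, Function.update_self]
  · intro b j hj1 hj2
    have hjv2 : j ≠ v := ne_of_gt hj1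
    simp only [hYb, hZb, hH1, hH2, Function.update_of_ne hj2, Function.update_of_ne hjv2]
  · intro b j hjv2 hj2
    simp only [hYb, hZb, hH1, hH2, Function.update_of_ne hj2, Function.update_of_ne hjv2]
end

section
/- Let G be a tree on [n], rooted at vertex n, Ordered (j is a descendant of i only if j < i), with parent map p. Let f: Ω → ℝ be c-Lipschitz for c ∈ ℝ₊ⁿ and let X be a G-dependent Ω-valued random vector. Then for every i ∈ [n−1], every x ∈ Ω, and every x'_i ∈ Ω_i, E[ f(X) | X_{[i]} = x_{[i]} ] − E[ f(X) | X_{[i−1]} = x_{[i−1]}, X_i = x'_i ] ≤ c_i + c_{p_i}. -/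
open MeasureTheory ProbabilityTheory BigOperators

lemma tree_edge {n : ℕ} {G : SimpleGraph (Fin n)} (hG : G.IsTree) {p : Fin n → Fin n}
    (hp : IsOrderedParentMap G p) {a b : Fin n} (hab : G.Adj a b) (h : a < b) :
    (a : ℕ) + 1 < n ∧ p a = b := by
  classical
  have hn : 1 ≤ n := by
    rcases Nat.eq_zero_or_pos n with h0 | h1
    · exact absurd (a.2) (by omega)
    · exact h1
  set D : Finset (Fin n) := Finset.univ.filter (fun i : Fin n => (i : ℕ) + 1 < n) with hD
  have hlast : D = Finset.univ.erase ⟨n - 1, by omega⟩ := by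
    ext i
    simp only [hD, Finset.mem_filter, Finset.mem_univ, true_and, Finset.mem_erase, and_true]
    constructor
    · intro hi hcon
      rw [hcon] at hi; simp at hi; omega
    · intro hi
      have := i.2
      rcases Nat.lt_or_ge ((i:ℕ)+1) n with h' | h'
      · exact h'
      · exfalso; apply hi; apply Fin.ext; simp; omega
  have hDcard : D.card = n - 1 := by
    rw [hlast, Finset.card_erase_of_mem (Finset.mem_univ _)]
    simp
  have hEcard : G.edgeFinset.card = n - 1 := by
    have h2 := hG.card_edgeFinset
    rw [Fintype.card_fin] at h2
    omega
  set φ : Fin n → Sym2 (Fin n) := fun i => s(i, p i) with hφ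
  have hsub : D.image φ ⊆ G.edgeFinset := by
    intro e he
    rw [Finset.mem_image] at he
    obtain ⟨i, hi, rfl⟩ := he
    rw [hD, Finset.mem_filter] at hi
    rw [SimpleGraph.mem_edgeFinset, SimpleGraph.mem_edgeSet]
    exact (hp i hi.2).1
  have hinj : Set.InjOn φ D := by
    intro i hi j hj hij
    rw [Finset.mem_coe, hD, Finset.mem_filter] at hi hj
    have hi2 := (hp i hi.2).2
    have hj2 := (hp j hj.2).2
    rw [hφ] at hij
    simp only [Sym2.eq_iff] at hij
    rcases hij with ⟨h1, h2⟩ | ⟨h1, h2⟩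
    · exact h1
    · rw [h2] at hi2
      rw [← h1] at hj2
      exact absurd (hi2.trans hj2) (lt_irrefl _)
  have himgcard : (D.image φ).card = n - 1 := by
    rw [Finset.card_image_of_injOn hinj, hDcard]
  have heq : D.image φ = G.edgeFinset :=
    Finset.eq_of_subset_of_card_le hsub (by rw [himgcard, hEcard])
  have hmem : s(a, b) ∈ D.image φ := by
    rw [heq, SimpleGraph.mem_edgeFinset, SimpleGraph.mem_edgeSet]; exact hab
  rw [Finset.mem_image] at hmem
  obtain ⟨i, hi, hie⟩ := hmem
  rw [hD, Finset.mem_filter] at hi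
  have hi2 := (hp i hi.2).2
  rw [hφ] at hie
  simp only [Sym2.eq_iff] at hie
  rcases hie with ⟨h1, h2⟩ | ⟨h1, h2⟩
  · subst h1; exact ⟨hi.2, h2⟩
  · rw [h2] at hi2
    rw [h1] at hi2
    exact absurd (hi2.trans h) (lt_irrefl _)

/-- The genuine subtree of `v`: iterates of `p` reach `v` and all earlier iterates
are non-root. -/
def SubtreeOf {n : ℕ} (p : Fin n → Fin n) (v : Fin n) : Set (Fin n) :=
  {j | ∃ k : ℕ, p^[k] j = v ∧ ∀ i < k, (p^[i] j : ℕ) + 1 < n}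

lemma subtree_self {n : ℕ} (p : Fin n → Fin n) (v : Fin n) : v ∈ SubtreeOf p v :=
  ⟨0, rfl, by omega⟩

lemma subtree_le {n : ℕ} {G : SimpleGraph (Fin n)} {p : Fin n → Fin n}
    (hp : IsOrderedParentMap G p) {v j : Fin n} (hj : j ∈ SubtreeOf p v) : j ≤ v := by
  obtain ⟨k, hk, hnr⟩ := hj
  induction k generalizing j with
  | zero => exact le_of_eq hk
  | succ m ih =>
    have h0 : (j : ℕ) + 1 < n := hnr 0 (Nat.succ_pos m)
    have hlt : j < p j := (hp j h0).2
    have hch : p^[m] (p j) = v := by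
      rw [← Function.iterate_succ_apply]; exact hk
    have hnr' : ∀ i < m, (p^[i] (p j) : ℕ) + 1 < n := by
      intro i hi
      have := hnr (i + 1) (by omega)
      rwa [Function.iterate_succ_apply] at this
    exact le_of_lt (lt_of_lt_of_le hlt (ih hch hnr'))

lemma subtree_parent {n : ℕ} {p : Fin n → Fin n} {v j : Fin n}
    (hj : j ∈ SubtreeOf p v) (hne : j ≠ v) : (j : ℕ) + 1 < n ∧ p j ∈ SubtreeOf p v := by
  obtain ⟨k, hk, hnr⟩ := hj
  cases k with
  | zero => exact absurd hk hne
  | succ m =>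
    refine ⟨hnr 0 (Nat.succ_pos m), m, ?_, ?_⟩
    · rw [← Function.iterate_succ_apply]; exact hk
    · intro i hi
      have := hnr (i + 1) (by omega)
      rwa [Function.iterate_succ_apply] at this

lemma subtree_child {n : ℕ} {p : Fin n → Fin n} {v j k : Fin n}
    (hj : j ∈ SubtreeOf p v) (hpk : p k = j) (hk : (k : ℕ) + 1 < n) :
    k ∈ SubtreeOf p v := by
  obtain ⟨m, hm, hnr⟩ := hj
  refine ⟨m + 1, ?_, ?_⟩
  · rw [Function.iterate_succ_apply, hpk]; exact hm
  · intro i hi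
    cases i with
    | zero => exact hk
    | succ i' =>
      rw [Function.iterate_succ_apply, hpk]
      exact hnr i' (by omega)

lemma subtree_adj {n : ℕ} {G : SimpleGraph (Fin n)} (hG : G.IsTree) {p : Fin n → Fin n}
    (hp : IsOrderedParentMap G p) {v j k : Fin n}
    (hj : j ∈ SubtreeOf p v) (hk : k ∉ SubtreeOf p v) (hadj : G.Adj j k) :
    j = v ∧ k = p v := by
  rcases lt_trichotomy j k with hlt | heq | hgt
  · obtain ⟨hj1, hpj⟩ := tree_edge hG hp hadj hlt
    by_cases hjv : j = v
    · exact ⟨hjv, by rw [← hjv, hpj]⟩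
    · exact absurd (hpj ▸ (subtree_parent hj hjv).2) hk
  · exact absurd heq (G.ne_of_adj hadj)
  · obtain ⟨hk1, hpk⟩ := tree_edge hG hp hadj.symm hgt
    exact absurd (subtree_child hj hpk hk1) hk

lemma integrable_of_abs_le {β : Type*} [MeasurableSpace β] (ρ : Measure β)
    [IsFiniteMeasure ρ] {F : β → ℝ} (hm : AEStronglyMeasurable F ρ) {C : ℝ}
    (h : ∀ z, |F z| ≤ C) : Integrable F ρ :=
  Integrable.mono' (integrable_const C) hm (Filter.Eventually.of_forall fun z => by
    rw [Real.norm_eq_abs]; exact h z)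

lemma integral_diff_le_of_forall {β β' : Type*} [MeasurableSpace β] [MeasurableSpace β']
    (ρ : Measure β) (ρ' : Measure β') [IsProbabilityMeasure ρ] [IsProbabilityMeasure ρ']
    {F : β → ℝ} {F' : β' → ℝ} (hF : Integrable F ρ) (hF' : Integrable F' ρ')
    {r : ℝ} (h : ∀ z z', F z - F' z' ≤ r) :
    ∫ z, F z ∂ρ - ∫ z, F' z ∂ρ' ≤ r := by
  have h1 : ∀ z, F z - r ≤ ∫ z', F' z' ∂ρ' := by
    intro z
    have := integral_mono (integrable_const (F z - r)) hF'
      (fun z' => by have := h z z'; linarith)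
    rwa [integral_const, probReal_univ, one_smul] at this
  have h2 : ∫ z, F z ∂ρ ≤ ∫ z', F' z' ∂ρ' + r := by
    have := integral_mono hF (integrable_const ((∫ z', F' z' ∂ρ') + r))
      (fun z => by have := h1 z; linarith)
    rwa [integral_const, probReal_univ, one_smul] at this
  linarith

theorem conditional_expectation_difference {n : ℕ} {Ω : Fin n → Type*}
    [∀ i, MeasurableSpace (Ω i)] [∀ i, TopologicalSpace (Ω i)]
    [∀ i, PolishSpace (Ω i)] [∀ i, BorelSpace (Ω i)]
    [∀ i, MeasurableSingletonClass (Ω i)]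
    {α : Type*} [MeasurableSpace α] (μ : Measure α) [IsProbabilityMeasure μ]
    (G : SimpleGraph (Fin n)) (hG : G.IsTree)
    (p : Fin n → Fin n) (hp : IsOrderedParentMap G p)
    (c : Fin n → ℝ) (hc : ∀ i, 0 ≤ c i)
    (f : (∀ i, Ω i) → ℝ) (hf : Measurable f) (hLip : CLipschitzOn c f)
    (X : ∀ i, α → Ω i) (hX : ∀ i, Measurable (X i))
    (hdep : GDependent μ G X)
    (v : Fin n) (hv : (v : ℕ) + 1 < n)
    (x : ∀ j, Ω j) (x' : Ω v)
    (hA : μ {a | ∀ j, j ≤ v → X j a = x j} ≠ 0)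
    (hA' : μ {a | (∀ j, j < v → X j a = x j) ∧ X v a = x'} ≠ 0) :
    (∫ a, f (fun j => X j a) ∂(μ[|{a | ∀ j, j ≤ v → X j a = x j}]))
      - (∫ a, f (fun j => X j a) ∂(μ[|{a | (∀ j, j < v → X j a = x j) ∧ X v a = x'}]))
      ≤ c v + c (p v) := by
  classical
  have hvpv : v < p v := (hp v hv).2
  haveI : Nonempty (Ω (p v)) := ⟨x (p v)⟩
  set S : Set (Fin n) := SubtreeOf p v with hS
  set Sfin : Finset (Fin n) := Finset.univ.filter (fun j => j ∈ S) with hSfin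
  set Tfin : Finset (Fin n) := Finset.univ.filter (fun j => j ∉ S ∧ j ≠ p v) with hTfin
  have hmemS : ∀ j : Fin n, j ∈ Sfin ↔ j ∈ S := by
    intro j; rw [hSfin, Finset.mem_filter]; simp
  have hmemT : ∀ j : Fin n, j ∈ Tfin ↔ (j ∉ S ∧ j ≠ p v) := by
    intro j; rw [hTfin, Finset.mem_filter]; simp
  set W : α → ((i : Sfin) → Ω i.1) := fun a => fun i : Sfin => X i.1 a with hW
  set Y : α → ((j : Tfin) → Ω j.1) := fun a => fun j : Tfin => X j.1 a with hY
  have hWm : Measurable W := measurable_pi_lambda _ fun i => hX i.1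
  have hYm : Measurable Y := measurable_pi_lambda _ fun j => hX j.1
  set Z : α → Ω (p v) := X (p v) with hZ
  have hZm : Measurable Z := hX (p v)
  have hvS : v ∈ S := subtree_self p v
  have hpvS : p v ∉ S := fun h => absurd (subtree_le hp h) (not_le.mpr hvpv)
  -- independence
  have hdisj : Disjoint Sfin Tfin := by
    rw [Finset.disjoint_left]; intro j hj hj'
    exact ((hmemT j).mp hj').1 ((hmemS j).mp hj)
  have hnadj : ∀ i ∈ Sfin, ∀ j ∈ Tfin, ¬ G.Adj i j := by
    intro i hi j hj hadj
    obtain ⟨_, hjpv⟩ := subtree_adj hG hp ((hmemS i).mp hi) ((hmemT j).mp hj).1 hadj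
    exact ((hmemT j).mp hj).2 hjpv
  have hInd := hdep Sfin Tfin hdisj hnadj
  have hmul := ProbabilityTheory.indepFun_iff_measure_inter_preimage_eq_mul.mp hInd
  -- events
  set x'' : ∀ j, Ω j := Function.update x v x' with hx''
  set A : Set α := {a | ∀ j, j ≤ v → X j a = x j} with hA_def
  set A' : Set α := {a | (∀ j, j < v → X j a = x j) ∧ X v a = x'} with hA'_def
  have hA'eq : A' = {a | ∀ j, j ≤ v → X j a = x'' j} := by
    rw [hA'_def]; ext a
    simp only [Set.mem_setOf_eq]
    constructor
    · rintro ⟨h1, h2⟩ j hj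
      rcases lt_or_eq_of_le hj with h | h
      · rw [hx'', Function.update_of_ne (ne_of_lt h)]; exact h1 j h
      · subst h; rw [hx'', Function.update_self]; exact h2
    · intro h
      constructor
      · intro j hj
        have := h j (le_of_lt hj)
        rwa [hx'', Function.update_of_ne (ne_of_lt hj)] at this
      · have := h v le_rfl
        rwa [hx'', Function.update_self] at this
  set PS : (∀ j, Ω j) → Set ((i : Sfin) → Ω i.1) := fun ξ => {y | ∀ i, y i = ξ i.1} with hPS
  set PB : Set ((j : Tfin) → Ω j.1) := {z | ∀ j : Tfin, (j.1 ≤ v) → z j = x j.1} with hPB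
  have hPSm : ∀ ξ, MeasurableSet (PS ξ) := by
    intro ξ
    have : PS ξ = ⋂ i : Sfin, (fun y : (i : Sfin) → Ω i.1 => y i) ⁻¹' {ξ i.1} := by
      rw [hPS]; ext y; simp [Set.mem_iInter]
    rw [this]
    exact MeasurableSet.iInter fun i => (measurable_pi_apply i) (measurableSet_singleton _)
  have hPBm : MeasurableSet PB := by
    have : PB = ⋂ (j : Tfin) (_ : j.1 ≤ v), (fun z : (j : Tfin) → Ω j.1 => z j) ⁻¹' {x j.1} := by
      rw [hPB]; ext z; simp [Set.mem_iInter]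
    rw [this]
    exact MeasurableSet.iInter fun j => MeasurableSet.iInter fun hj =>
      (measurable_pi_apply j) (measurableSet_singleton _)
  have hdecomp : ∀ ξ : ∀ j, Ω j, (∀ j, j ≠ v → ξ j = x j) →
      {a | ∀ j, j ≤ v → X j a = ξ j} = W ⁻¹' (PS ξ) ∩ Y ⁻¹' PB := by
    intro ξ hξ
    ext a
    simp only [Set.mem_setOf_eq, Set.mem_inter_iff, Set.mem_preimage, hPS, hPB, hW, hY]
    constructor
    · intro h
      refine ⟨fun i => h i.1 (subtree_le hp ((hmemS i.1).mp i.2)), fun j hj => ?_⟩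
      rw [h j.1 hj, hξ j.1]
      intro hcon
      exact ((hmemT j.1).mp j.2).1 (hcon ▸ hvS)
    · rintro ⟨h1, h2⟩ j hj
      by_cases hjS : j ∈ S
      · exact h1 ⟨j, (hmemS j).mpr hjS⟩
      · have hjpv : j ≠ p v := fun hcon => absurd (hcon ▸ hj) (not_le.mpr hvpv)
        have hjT : j ∈ Tfin := (hmemT j).mpr ⟨hjS, hjpv⟩
        rw [h2 ⟨j, hjT⟩ hj, hξ j]
        intro hcon
        exact hjS (hcon ▸ hvS)
  have hAeq2 : A = W ⁻¹' (PS x) ∩ Y ⁻¹' PB := hdecomp x (fun _ _ => rfl)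
  have hA'eq2 : A' = W ⁻¹' (PS x'') ∩ Y ⁻¹' PB := by
    rw [hA'eq]
    exact hdecomp x'' (fun j hj => by rw [hx'', Function.update_of_ne hj])
  set FB : Set α := Y ⁻¹' PB with hFB
  have hFBm : MeasurableSet FB := hYm hPBm
  have hAm : MeasurableSet A := by rw [hAeq2]; exact (hWm (hPSm x)).inter hFBm
  have hA'm : MeasurableSet A' := by rw [hA'eq2]; exact (hWm (hPSm x'')).inter hFBm
  -- the key map equality
  have key : ∀ (ξ : ∀ j, Ω j) (B : Set α), B = W ⁻¹' (PS ξ) ∩ FB → μ B ≠ 0 →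
      μ (W ⁻¹' (PS ξ)) ≠ 0 ∧ μ FB ≠ 0 ∧ (μ[|B]).map Y = (μ[|FB]).map Y := by
    intro ξ B hBeq hB0
    have hBm : MeasurableSet B := by rw [hBeq]; exact (hWm (hPSm ξ)).inter hFBm
    have hprodB : μ B = μ (W ⁻¹' (PS ξ)) * μ FB := by
      rw [hBeq, hFB]; exact hmul _ _ (hPSm ξ) hPBm
    have hne : μ (W ⁻¹' (PS ξ)) ≠ 0 ∧ μ FB ≠ 0 := by
      rw [hprodB] at hB0
      exact ⟨fun h => hB0 (by rw [h, zero_mul]), fun h => hB0 (by rw [h, mul_zero])⟩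
    refine ⟨hne.1, hne.2, ?_⟩
    ext U hU
    rw [Measure.map_apply hYm hU, Measure.map_apply hYm hU,
      ProbabilityTheory.cond_apply hBm, ProbabilityTheory.cond_apply hFBm]
    have h1 : B ∩ Y ⁻¹' U = W ⁻¹' (PS ξ) ∩ Y ⁻¹' (PB ∩ U) := by
      rw [hBeq, hFB, Set.preimage_inter, Set.inter_assoc]
    have h2 : FB ∩ Y ⁻¹' U = Y ⁻¹' (PB ∩ U) := by
      rw [hFB, Set.preimage_inter]
    rw [h1, h2, hmul _ _ (hPSm ξ) (hPBm.inter hU), hprodB]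
    have ha0 : μ (W ⁻¹' (PS ξ)) ≠ 0 := hne.1
    have hatop : μ (W ⁻¹' (PS ξ)) ≠ ⊤ := measure_ne_top μ _
    rw [ENNReal.mul_inv (Or.inl ha0) (Or.inl hatop)]
    calc (μ (W ⁻¹' (PS ξ)))⁻¹ * (μ FB)⁻¹ * (μ (W ⁻¹' (PS ξ)) * μ (Y ⁻¹' (PB ∩ U)))
        = ((μ (W ⁻¹' (PS ξ)))⁻¹ * μ (W ⁻¹' (PS ξ))) * ((μ FB)⁻¹ * μ (Y ⁻¹' (PB ∩ U))) := by
          ring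
      _ = (μ FB)⁻¹ * μ (Y ⁻¹' (PB ∩ U)) := by
          rw [ENNReal.inv_mul_cancel ha0 hatop, one_mul]
  obtain ⟨hα0, hFB0, hmapA⟩ := key x A hAeq2 hA
  obtain ⟨hα'0, -, hmapA'⟩ := key x'' A' hA'eq2 hA'
  haveI hPA : IsProbabilityMeasure (μ[|A]) := ProbabilityTheory.cond_isProbabilityMeasure hA
  haveI hPA' : IsProbabilityMeasure (μ[|A']) := ProbabilityTheory.cond_isProbabilityMeasure hA'
  haveI hPFB : IsProbabilityMeasure (μ[|FB]) := ProbabilityTheory.cond_isProbabilityMeasure hFB0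
  set m : Measure ((j : Tfin) → Ω j.1) := (μ[|FB]).map Y with hm
  haveI : IsProbabilityMeasure m := Measure.isProbabilityMeasure_map hYm.aemeasurable
  -- the gluing function
  have hpvT : p v ∉ Tfin := fun h => ((hmemT (p v)).mp h).2 rfl
  set glue : (∀ j, Ω j) → ((j : Tfin) → Ω j.1) → Ω (p v) → (∀ j, Ω j) := fun ξ y z =>
    Function.update (fun j => if h : j ∈ Tfin then y ⟨j, h⟩ else ξ j) (p v) z with hglue
  have hglue_T : ∀ ξ y z (j : Fin n) (h : j ∈ Tfin), glue ξ y z j = y ⟨j, h⟩ := by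
    intro ξ y z j h
    have hjpv : j ≠ p v := fun hcon => hpvT (hcon ▸ h)
    rw [hglue]
    simp only [Function.update_of_ne hjpv, dif_pos h]
  have hglue_pv : ∀ ξ y z, glue ξ y z (p v) = z := by
    intro ξ y z; rw [hglue]; simp only [Function.update_self]
  have hglue_S : ∀ ξ y z (j : Fin n), j ∉ Tfin → j ≠ p v → glue ξ y z j = ξ j := by
    intro ξ y z j h hjpv
    rw [hglue]
    simp only [Function.update_of_ne hjpv, dif_neg h]
  have hgluem : ∀ ξ, Measurable (fun q : ((j : Tfin) → Ω j.1) × Ω (p v) => glue ξ q.1 q.2) := by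
    intro ξ
    apply measurable_pi_lambda
    intro j
    by_cases h2 : j = p v
    · subst h2
      simp only [hglue, Function.update_self]
      exact measurable_snd
    · simp only [hglue, Function.update_of_ne h2]
      by_cases h : j ∈ Tfin
      · simp only [dif_pos h]
        exact (measurable_pi_apply (⟨j, h⟩ : Tfin)).comp measurable_fst
      · simp only [dif_neg h]
        exact measurable_const
  have hFm : ∀ ξ, Measurable (fun q : ((j : Tfin) → Ω j.1) × Ω (p v) => f (glue ξ q.1 q.2)) :=
    fun ξ => hf.comp (hgluem ξ)
  -- boundedness of f
  set Cb : ℝ := |f x| + ∑ i, c i with hCb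
  have hbound : ∀ w, |f w| ≤ Cb := by
    intro w
    have h1 := hLip w x
    have h2 : (∑ i, if w i ≠ x i then c i else 0) ≤ ∑ i, c i := by
      apply Finset.sum_le_sum
      intro i _
      split
      · exact le_rfl
      · exact hc i
    have h3 : |f w| ≤ |f w - f x| + |f x| := by
      have := abs_add_le (f w - f x) (f x); simpa using this
    rw [hCb]; linarith
  -- the Lipschitz difference bound
  have hdiff : ∀ (y : (j : Tfin) → Ω j.1) (z z' : Ω (p v)),
      f (glue x y z) - f (glue x'' y z') ≤ c v + c (p v) := by
    intro y z z'
    have h1 := hLip (glue x y z) (glue x'' y z')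
    have hpoint : ∀ i : Fin n, (if glue x y z i ≠ glue x'' y z' i then c i else 0)
        ≤ (if i = v then c v else 0) + (if i = p v then c (p v) else 0) := by
      intro i
      by_cases hiv : i = v
      · subst hiv
        rw [if_pos rfl, if_neg (ne_of_lt hvpv)]
        split
        · exact le_of_eq (by ring)
        · simpa using hc _
      · by_cases hipv : i = p v
        · subst hipv
          rw [if_neg hiv, if_pos rfl, zero_add]
          split
          · exact le_rfl
          · exact hc _
        · have heq : glue x y z i = glue x'' y z' i := by
            by_cases hT : i ∈ Tfin
            · rw [hglue_T x y z i hT, hglue_T x'' y z' i hT]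
            · rw [hglue_S x y z i hT hipv, hglue_S x'' y z' i hT hipv, hx'',
                Function.update_of_ne hiv]
          rw [if_neg (by simp [heq]), if_neg hiv, if_neg hipv, add_zero]
    have h2 : (∑ i, if glue x y z i ≠ glue x'' y z' i then c i else 0)
        ≤ c v + c (p v) := by
      calc (∑ i, if glue x y z i ≠ glue x'' y z' i then c i else 0)
          ≤ ∑ i : Fin n, ((if i = v then c v else 0) + (if i = p v then c (p v) else 0)) :=
            Finset.sum_le_sum fun i _ => hpoint i
        _ = c v + c (p v) := by
            rw [Finset.sum_add_distrib, Finset.sum_ite_eq' Finset.univ v fun _ => c v,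
              Finset.sum_ite_eq' Finset.univ (p v) fun _ => c (p v)]
            simp
    have h3 : f (glue x y z) - f (glue x'' y z') ≤ |f (glue x y z) - f (glue x'' y z')| :=
      le_abs_self _
    linarith
  -- a.e. identification of the integrand
  have hae : ∀ (B : Set α), MeasurableSet B → ∀ (ξ : ∀ j, Ω j),
      (∀ a ∈ B, ∀ j, j ≤ v → X j a = ξ j) →
      ∫ a, f (fun j => X j a) ∂(μ[|B]) = ∫ a, f (glue ξ (Y a) (Z a)) ∂(μ[|B]) := by
    intro B hBm ξ hB
    apply integral_congr_ae
    have hnull : μ[|B] Bᶜ = 0 := by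
      rw [ProbabilityTheory.cond_apply hBm]
      simp
    have hsub : {a | ¬ f (fun j => X j a) = f (glue ξ (Y a) (Z a))} ⊆ Bᶜ := by
      intro a ha
      by_contra hcon
      rw [Set.mem_compl_iff, not_not] at hcon
      apply ha
      congr 1
      funext j
      by_cases hT : j ∈ Tfin
      · rw [hglue_T ξ (Y a) (Z a) j hT]
      · by_cases hjpv : j = p v
        · subst hjpv
          rw [hglue_pv]
        · rw [hglue_S ξ (Y a) (Z a) j hT hjpv]
          have hjS : j ∈ S := by
            by_contra hjS
            exact hT ((hmemT j).mpr ⟨hjS, hjpv⟩)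
          exact hB a hcon j (subtree_le hp hjS)
    exact ae_iff.mpr (measure_mono_null hsub hnull)
  -- disintegration computation
  have hcompInt : ∀ (B : Set α) (ξ : ∀ j, Ω j), MeasurableSet B → μ B ≠ 0 →
      (∀ a ∈ B, ∀ j, j ≤ v → X j a = ξ j) → Measure.map Y (μ[|B]) = m →
      (∫ a, f (fun j => X j a) ∂(μ[|B])
          = ∫ y, ∫ z, f (glue ξ y z) ∂(condDistrib Z Y (μ[|B]) y) ∂m
        ∧ Integrable (fun y => ∫ z, f (glue ξ y z) ∂(condDistrib Z Y (μ[|B]) y)) m) := by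
    intro B ξ hBm hB0 hBsub hBmap
    haveI : IsProbabilityMeasure (μ[|B]) := ProbabilityTheory.cond_isProbabilityMeasure hB0
    set ρ : Measure (((j : Tfin) → Ω j.1) × Ω (p v)) :=
      (μ[|B]).map (fun a => (Y a, Z a)) with hρ
    haveI : IsProbabilityMeasure ρ := Measure.isProbabilityMeasure_map (hYm.prodMk hZm).aemeasurable
    have hint : Integrable (fun q : ((j : Tfin) → Ω j.1) × Ω (p v) => f (glue ξ q.1 q.2)) ρ :=
      integrable_of_abs_le ρ (hFm ξ).aestronglyMeasurable (fun q => hbound _)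
    have hcomp : Measure.map Y (μ[|B]) ⊗ₘ condDistrib Z Y (μ[|B]) = ρ := by
      have h1 : ρ.fst = Measure.map Y (μ[|B]) := Measure.fst_map_prodMk hZm
      rw [condDistrib, ← h1, hρ]
      exact Measure.disintegrate _ _
    have hint2 : Integrable (fun q : ((j : Tfin) → Ω j.1) × Ω (p v) => f (glue ξ q.1 q.2))
        (Measure.map Y (μ[|B]) ⊗ₘ condDistrib Z Y (μ[|B])) := by
      rw [hcomp]; exact hint
    have e1 : ∫ a, f (fun j => X j a) ∂(μ[|B]) = ∫ a, f (glue ξ (Y a) (Z a)) ∂(μ[|B]) :=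
      hae B hBm ξ hBsub
    have e2 : ∫ a, f (glue ξ (Y a) (Z a)) ∂(μ[|B])
        = ∫ q : ((j : Tfin) → Ω j.1) × Ω (p v), f (glue ξ q.1 q.2) ∂ρ :=
      (integral_map (hYm.prodMk hZm).aemeasurable (hFm ξ).aestronglyMeasurable).symm
    have e3 : ∫ q : ((j : Tfin) → Ω j.1) × Ω (p v), f (glue ξ q.1 q.2) ∂ρ
        = ∫ y, ∫ z, f (glue ξ y z) ∂(condDistrib Z Y (μ[|B]) y) ∂(Measure.map Y (μ[|B])) := by
      rw [← hcomp]
      exact Measure.integral_compProd hint2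
    constructor
    · rw [e1, e2, e3, hBmap]
    · have := MeasureTheory.Integrable.integral_condDistrib_map hZm.aemeasurable hint
      rw [hBmap] at this
      exact this
  obtain ⟨eA, iA⟩ := hcompInt A x hAm hA (fun a ha j hj => ha j hj) hmapA
  obtain ⟨eA', iA'⟩ := hcompInt A' x'' hA'm hA'
    (fun a ha j hj => by rw [hA'eq] at ha; exact ha j hj) hmapA'
  rw [eA, eA']
  have hptwise : ∀ y, (∫ z, f (glue x y z) ∂(condDistrib Z Y (μ[|A]) y))
      - (∫ z, f (glue x'' y z) ∂(condDistrib Z Y (μ[|A']) y)) ≤ c v + c (p v) := by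
    intro y
    haveI : IsProbabilityMeasure (μ[|A]) := hPA
    apply integral_diff_le_of_forall
    · exact integrable_of_abs_le _
        ((hFm x).comp (measurable_prodMk_left)).aestronglyMeasurable (fun z => hbound _)
    · exact integrable_of_abs_le _
        ((hFm x'').comp (measurable_prodMk_left)).aestronglyMeasurable (fun z => hbound _)
    · exact fun z z' => hdiff y z z'
  have h4 : (∫ y, ∫ z, f (glue x y z) ∂(condDistrib Z Y (μ[|A]) y) ∂m)
      ≤ ∫ y, ((∫ z, f (glue x'' y z) ∂(condDistrib Z Y (μ[|A']) y)) + (c v + c (p v))) ∂m :=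
    integral_mono iA (iA'.add (integrable_const _)) (fun y => by have := hptwise y; linarith)
  rw [integral_add iA' (integrable_const _), integral_const, probReal_univ,
    one_smul] at h4
  linarith
end

section
/- Let G be a graph on vertex set V and X = (X_i)_{i∈V} a G-dependent random vector such that each X_i takes values in a real interval of length c_i ≥ 0. Then for every t > 0, P( ∑_{i∈V} X_i − E[∑_{i∈V} X_i] ≥ t ) ≤ exp( −2t² / ( χ_f(G) · ∑_{i∈V} c_i² ) ), where χ_f(G) is the fractional chromatic number of G. -/
open MeasureTheory ProbabilityTheory BigOperators

open Real

/-! ### Auxiliary lemmas -/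

section Calculus

/-- Core inequality behind Hoeffding's lemma. -/
lemma Janson.hoeffding_core {p : ℝ} (hp : 0 ≤ p) (hp1 : p ≤ 1) (u : ℝ) :
    p + (1 - p) * exp u ≤ exp ((1 - p) * u + u ^ 2 / 8) := by
  have hq : 0 ≤ 1 - p := by linarith
  set D : ℝ → ℝ := fun u => p + (1 - p) * exp u with hD_def
  have hDpos : ∀ u, 0 < D u := by
    intro u
    rcases hp.eq_or_lt with h | h
    · have : (1 - p) = 1 := by rw [← h]; ring
      simp only [hD_def, ← h, this]
      positivity
    · exact add_pos_of_pos_of_nonneg h (by positivity)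
  have hD : ∀ u, HasDerivAt D ((1 - p) * exp u) u := by
    intro u
    exact ((Real.hasDerivAt_exp u).const_mul (1 - p)).const_add p
  set g : ℝ → ℝ := fun u => (1 - p) * u + u ^ 2 / 8 - Real.log (D u) with hg_def
  set g' : ℝ → ℝ := fun u => (1 - p) + u / 4 - (1 - p) * exp u / D u with hg'_def
  have hg : ∀ u, HasDerivAt g (g' u) u := by
    intro u
    have h1 : HasDerivAt (fun u : ℝ => (1 - p) * u + u ^ 2 / 8)
        ((1 - p) + 2 * u / 8) u := by
      have h2 := ((hasDerivAt_id u).const_mul (1 - p)).add ((hasDerivAt_pow 2 u).div_const 8)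
      simpa [pow_one, Pi.add_def] using h2
    have h2 : HasDerivAt (fun u => Real.log (D u)) ((1 - p) * exp u / D u) u :=
      (hD u).log (hDpos u).ne'
    have := h1.sub h2
    refine this.congr_deriv ?_
    simp only [hg'_def]
    ring
  set g'' : ℝ → ℝ := fun u => 1 / 4 - p * ((1 - p) * exp u) / (D u) ^ 2 with hg''_def
  have hg' : ∀ u, HasDerivAt g' (g'' u) u := by
    intro u
    have hdiv : HasDerivAt (fun u => (1 - p) * exp u / D u)
        (((1 - p) * exp u * D u - (1 - p) * exp u * ((1 - p) * exp u)) / (D u) ^ 2) u :=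
      ((Real.hasDerivAt_exp u).const_mul (1 - p)).div (hD u) (hDpos u).ne'
    have h1 : HasDerivAt (fun u : ℝ => (1 - p) + u / 4) (1 / 4) u := by
      simpa using ((hasDerivAt_id u).div_const 4).const_add (1 - p)
    have := h1.sub hdiv
    refine this.congr_deriv ?_
    have : D u = p + (1 - p) * exp u := rfl
    simp only [hg''_def, this]
    field_simp
    ring
  have hg''_nonneg : ∀ u, 0 ≤ g'' u := by
    intro u
    have h : p * ((1 - p) * exp u) ≤ (D u) ^ 2 / 4 := by
      have : D u = p + (1 - p) * exp u := rfl
      nlinarith [sq_nonneg (p - (1 - p) * exp u)]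
    have h2 : (0:ℝ) < (D u) ^ 2 := pow_pos (hDpos u) 2
    rw [hg''_def]
    rw [sub_nonneg, div_le_iff₀ h2]
    linarith
  have hg'_mono : Monotone g' :=
    monotone_of_deriv_nonneg (fun u => (hg' u).differentiableAt)
      (fun u => by rw [(hg' u).deriv]; exact hg''_nonneg u)
  have hD0 : D 0 = 1 := by simp [hD_def]
  have hg'0 : g' 0 = 0 := by simp [hg'_def, hD0]
  have hg0 : g 0 = 0 := by simp [hg_def, hD0]
  have hgnonneg : ∀ u, 0 ≤ g u := by
    intro u
    rcases le_total 0 u with h | h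
    · have : MonotoneOn g (Set.Ici 0) := by
        apply monotoneOn_of_deriv_nonneg (convex_Ici 0)
          (fun x _ => (hg x).differentiableAt.continuousAt.continuousWithinAt)
          (fun x _ => (hg x).differentiableAt.differentiableWithinAt)
        intro x hx
        rw [(hg x).deriv]
        have : (0:ℝ) ≤ x := le_of_lt (by simpa using hx)
        calc (0:ℝ) = g' 0 := hg'0.symm
          _ ≤ g' x := hg'_mono this
      have := this (Set.self_mem_Ici) (by exact h) h
      rwa [hg0] at this
    · have : AntitoneOn g (Set.Iic 0) := by
        apply antitoneOn_of_deriv_nonpos (convex_Iic 0)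
          (fun x _ => (hg x).differentiableAt.continuousAt.continuousWithinAt)
          (fun x _ => (hg x).differentiableAt.differentiableWithinAt)
        intro x hx
        rw [(hg x).deriv]
        have hx0 : x ≤ 0 := le_of_lt (by simpa using hx)
        calc g' x ≤ g' 0 := hg'_mono hx0
          _ = 0 := hg'0
      have := this (by exact h) (Set.self_mem_Iic) h
      rwa [hg0] at this
  have := hgnonneg u
  rw [hg_def] at this
  simp only [sub_nonneg] at this
  have hlog : Real.log (D u) ≤ (1 - p) * u + u ^ 2 / 8 := this
  calc D u = exp (Real.log (D u)) := (Real.exp_log (hDpos u)).symm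
    _ ≤ exp ((1 - p) * u + u ^ 2 / 8) := exp_le_exp.mpr hlog

end Calculus

section Aux

variable {α : Type*} [MeasurableSpace α] {μ : Measure α} [IsProbabilityMeasure μ]

lemma Janson.integrable_of_bounded {f : α → ℝ} (hf : Measurable f) {M : ℝ}
    (h : ∀ ω, |f ω| ≤ M) : Integrable f μ := by
  refine Integrable.mono' (integrable_const M) hf.aestronglyMeasurable ?_
  exact Filter.Eventually.of_forall fun ω => by simpa using h ω

lemma Janson.integrable_exp_of_bounded {f : α → ℝ} (hf : Measurable f) {M : ℝ}
    (h : ∀ ω, f ω ≤ M) : Integrable (fun ω => exp (f ω)) μ := by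
  refine Integrable.mono' (integrable_const (exp M)) hf.exp.aestronglyMeasurable ?_
  refine Filter.Eventually.of_forall fun ω => ?_
  rw [Real.norm_of_nonneg (exp_nonneg _)]
  exact exp_le_exp.mpr (h ω)

/-- Hoeffding's lemma. -/
lemma Janson.hoeffding_lemma {Y : α → ℝ} (hY : Measurable Y) {a b : ℝ}
    (hab : a ≤ b) (hr : ∀ ω, Y ω ∈ Set.Icc a b) (s : ℝ) :
    ∫ ω, exp (s * Y ω) ∂μ ≤ exp (s * (∫ ω, Y ω ∂μ) + s ^ 2 * (b - a) ^ 2 / 8) := by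
  have hYb : ∀ ω, |Y ω| ≤ max |a| |b| := fun ω => by
    rcases hr ω with ⟨h1, h2⟩
    rw [abs_le]
    constructor
    · calc -(max |a| |b|) ≤ -|a| := by simp
        _ ≤ a := neg_abs_le a
        _ ≤ Y ω := h1
    · calc Y ω ≤ b := h2
        _ ≤ |b| := le_abs_self b
        _ ≤ max |a| |b| := le_max_right _ _
  have hYint : Integrable Y μ := Janson.integrable_of_bounded hY hYb
  set m := ∫ ω, Y ω ∂μ with hm
  have hma : a ≤ m := by
    rw [hm]
    calc a = ∫ _ : α, a ∂μ := by simp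
      _ ≤ ∫ ω, Y ω ∂μ := integral_mono (integrable_const a) hYint (fun ω => (hr ω).1)
  have hmb : m ≤ b := by
    rw [hm]
    calc ∫ ω, Y ω ∂μ ≤ ∫ _ : α, b ∂μ :=
          integral_mono hYint (integrable_const b) (fun ω => (hr ω).2)
      _ = b := by simp
  rcases hab.eq_or_lt with heq | hlt
  · have hYc : ∀ ω, Y ω = a := fun ω => le_antisymm (heq ▸ (hr ω).2) (hr ω).1
    have hE : ∫ ω, exp (s * Y ω) ∂μ = exp (s * a) := by
      simp only [hYc]
      simp
    have hma' : m = a := le_antisymm (heq ▸ hmb) hma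
    rw [hE, hma']
    apply exp_le_exp.mpr
    have h8 : 0 ≤ s ^ 2 * (b - a) ^ 2 / 8 := by positivity
    linarith
  · have hba : 0 < b - a := sub_pos.mpr hlt
    have hconv : ∀ ω, exp (s * Y ω) ≤
        ((b - Y ω) / (b - a)) * exp (s * a) + ((Y ω - a) / (b - a)) * exp (s * b) := by
      intro ω
      rcases hr ω with ⟨h1, h2⟩
      have hw1 : 0 ≤ (b - Y ω) / (b - a) := div_nonneg (by linarith) hba.le
      have hw2 : 0 ≤ (Y ω - a) / (b - a) := div_nonneg (by linarith) hba.le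
      have hsum : (b - Y ω) / (b - a) + (Y ω - a) / (b - a) = 1 := by
        field_simp
        ring
      have hpt : ((b - Y ω) / (b - a)) * (s * a) + ((Y ω - a) / (b - a)) * (s * b)
          = s * Y ω := by
        field_simp
        ring
      have h := convexOn_exp.2 (Set.mem_univ (s * a)) (Set.mem_univ (s * b))
        hw1 hw2 hsum
      simp only [smul_eq_mul] at h
      rwa [hpt] at h
    set k1 : ℝ := (b * exp (s * a) - a * exp (s * b)) / (b - a) with hk1
    set k2 : ℝ := (exp (s * b) - exp (s * a)) / (b - a) with hk2
    have hrw : ∀ ω, ((b - Y ω) / (b - a)) * exp (s * a)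
        + ((Y ω - a) / (b - a)) * exp (s * b) = k1 + k2 * Y ω := by
      intro ω
      rw [hk1, hk2]
      field_simp
      ring
    have hint : ∫ ω, exp (s * Y ω) ∂μ ≤ ∫ ω, (k1 + k2 * Y ω) ∂μ := by
      refine integral_mono ?_ ?_ ?_
      · exact Janson.integrable_exp_of_bounded (hY.const_mul s)
          (fun ω => by
            calc s * Y ω ≤ |s * Y ω| := le_abs_self _
              _ = |s| * |Y ω| := abs_mul _ _
              _ ≤ |s| * max |a| |b| := by
                  have := hYb ω
                  exact mul_le_mul_of_nonneg_left this (abs_nonneg s))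
      · exact (integrable_const k1).add ((hYint.const_mul k2))
      · intro ω
        calc exp (s * Y ω) ≤ _ := hconv ω
          _ = k1 + k2 * Y ω := hrw ω
    have hval : ∫ ω, (k1 + k2 * Y ω) ∂μ = k1 + k2 * m := by
      rw [integral_add (integrable_const k1) (hYint.const_mul k2)]
      simp [integral_const_mul, hm]
    set p := (b - m) / (b - a) with hp_def
    have hp0 : 0 ≤ p := div_nonneg (by linarith) hba.le
    have hp1 : p ≤ 1 := by
      rw [hp_def, div_le_one hba]
      linarith
    have h1p : 1 - p = (m - a) / (b - a) := by
      rw [hp_def]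
      field_simp
      ring
    have hcore := Janson.hoeffding_core hp0 hp1 (s * (b - a))
    have hexp : k1 + k2 * m = exp (s * a) * (p + (1 - p) * exp (s * (b - a))) := by
      have he : exp (s * b) = exp (s * a) * exp (s * (b - a)) := by
        rw [← Real.exp_add]
        congr 1
        ring
      rw [hk1, hk2, hp_def, h1p, he]
      field_simp
      ring
    have hfin : exp (s * a) * (p + (1 - p) * exp (s * (b - a)))
        ≤ exp (s * m + s ^ 2 * (b - a) ^ 2 / 8) := by
      calc exp (s * a) * (p + (1 - p) * exp (s * (b - a)))
          ≤ exp (s * a) * exp ((1 - p) * (s * (b - a)) + (s * (b - a)) ^ 2 / 8) := by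
            exact mul_le_mul_of_nonneg_left hcore (exp_nonneg _)
        _ = exp (s * a + ((1 - p) * (s * (b - a)) + (s * (b - a)) ^ 2 / 8)) := by
            rw [← Real.exp_add]
        _ = exp (s * m + s ^ 2 * (b - a) ^ 2 / 8) := by
            congr 1
            rw [h1p]
            field_simp
            ring
    calc ∫ ω, exp (s * Y ω) ∂μ ≤ ∫ ω, (k1 + k2 * Y ω) ∂μ := hint
      _ = k1 + k2 * m := hval
      _ = exp (s * a) * (p + (1 - p) * exp (s * (b - a))) := hexp
      _ ≤ exp (s * m + s ^ 2 * (b - a) ^ 2 / 8) := hfin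

/-- Hoeffding's lemma, centered form. -/
lemma Janson.hoeffding_centered {Y : α → ℝ} (hY : Measurable Y) {a c : ℝ} (hc : 0 ≤ c)
    (hr : ∀ ω, Y ω ∈ Set.Icc a (a + c)) (u : ℝ) :
    ∫ ω, exp (u * (Y ω - ∫ ω', Y ω' ∂μ)) ∂μ ≤ exp (u ^ 2 * c ^ 2 / 8) := by
  set m := ∫ ω', Y ω' ∂μ with hm
  have h1 : (fun ω => exp (u * (Y ω - m))) = fun ω => exp (-(u * m)) * exp (u * Y ω) := by
    funext ω
    rw [← Real.exp_add]
    congr 1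
    ring
  rw [h1, integral_const_mul]
  have h2 := Janson.hoeffding_lemma (μ := μ) hY (le_add_of_nonneg_right hc) hr u
  calc exp (-(u * m)) * ∫ ω, exp (u * Y ω) ∂μ
      ≤ exp (-(u * m)) * exp (u * m + u ^ 2 * (a + c - a) ^ 2 / 8) :=
        mul_le_mul_of_nonneg_left h2 (exp_nonneg _)
    _ = exp (u ^ 2 * c ^ 2 / 8) := by
        rw [← Real.exp_add]
        congr 1
        ring

end Aux

/-- Weight received by a vertex in a weighting of the sets of vertices. -/
noncomputable def Janson.Tw {n : ℕ} (g : Finset (Fin n) → ℝ) (i : Fin n) : ℝ :=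
  ∑ I ∈ Finset.univ.filter (fun I : Finset (Fin n) => i ∈ I), g I

/-- Swap a sum over sets and their elements. -/
lemma Janson.sum_mul_sum_swap {n : ℕ} (g : Finset (Fin n) → ℝ) (f : Fin n → ℝ) :
    ∑ I : Finset (Fin n), g I * ∑ i ∈ I, f i = ∑ i, f i * Janson.Tw g i := by
  classical
  have h1 : ∀ I : Finset (Fin n), g I * ∑ i ∈ I, f i
      = ∑ i : Fin n, if i ∈ I then g I * f i else 0 := by
    intro I
    rw [Finset.mul_sum, Finset.sum_ite_mem, Finset.univ_inter]
  simp_rw [h1]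
  rw [Finset.sum_comm]
  refine Finset.sum_congr rfl fun i _ => ?_
  rw [Janson.Tw, ← Finset.sum_filter, Finset.mul_sum]
  refine Finset.sum_congr rfl fun I _ => mul_comm _ _

lemma Janson.prod_ofReal_exp_rpow {ι : Type*} (s : Finset ι) (p z : ι → ℝ)
    (hp : ∀ i ∈ s, 0 ≤ p i) :
    ∏ i ∈ s, (ENNReal.ofReal (exp (z i))) ^ (p i)
      = ENNReal.ofReal (exp (∑ i ∈ s, p i * z i)) := by
  classical
  induction s using Finset.induction_on with
  | empty => simp
  | @insert j s hj ih =>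
    rw [Finset.prod_insert hj, Finset.sum_insert hj,
      ih (fun i hi => hp i (Finset.mem_insert_of_mem hi)),
      ENNReal.ofReal_rpow_of_pos (exp_pos _), ← Real.exp_mul,
      ← ENNReal.ofReal_mul (exp_nonneg _), ← Real.exp_add, mul_comm (z j) (p j)]

section Indep

variable {n : ℕ} {α : Type*} [MeasurableSpace α] {μ : Measure α} [IsProbabilityMeasure μ]
  {G : SimpleGraph (Fin n)} {X : Fin n → α → ℝ}

/-- For an independent set, the mgf of sums factorizes. -/
lemma Janson.indep_prod_exp (hX : ∀ i, Measurable (X i)) (hdep : GDependent μ G X)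
    (u d : Fin n → ℝ) (I : Finset (Fin n)) (hI : IsIndepFinset G I) :
    ∫ a, exp (∑ i ∈ I, u i * (X i a - d i)) ∂μ
      = ∏ i ∈ I, ∫ a, exp (u i * (X i a - d i)) ∂μ := by
  classical
  induction I using Finset.induction_on with
  | empty => simp
  | @insert j I hj ih =>
    have hI' : IsIndepFinset G I := fun i hi k hk =>
      hI i (Finset.mem_insert_of_mem hi) k (Finset.mem_insert_of_mem hk)
    have hdisj : Disjoint ({j} : Finset (Fin n)) I :=
      Finset.disjoint_singleton_left.mpr hj
    have hnadj : ∀ i ∈ ({j} : Finset (Fin n)), ∀ k ∈ I, ¬ G.Adj i k := by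
      intro i hi k hk
      rw [Finset.mem_singleton] at hi
      subst hi
      exact hI i (Finset.mem_insert_self _ _) k (Finset.mem_insert_of_mem hk)
    have hind := hdep {j} I hdisj hnadj
    set f : (↥({j} : Finset (Fin n)) → ℝ) → ℝ :=
      fun v => exp (u j * (v ⟨j, Finset.mem_singleton_self j⟩ - d j)) with hf_def
    set g : (↥I → ℝ) → ℝ :=
      fun v => exp (∑ i : ↥I, u i.1 * (v i - d i.1)) with hg_def
    have hf : Measurable f := by
      fun_prop
    have hg : Measurable g := by
      apply Measurable.exp
      fun_prop
    have hcomp := hind.comp hf hg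
    have hF : (f ∘ fun a => fun i : ↥({j} : Finset (Fin n)) => X i.1 a)
        = fun a => exp (u j * (X j a - d j)) := rfl
    have hG : (g ∘ fun a => fun i : ↥I => X i.1 a)
        = fun a => exp (∑ i ∈ I, u i * (X i a - d i)) := by
      funext a
      simp only [Function.comp_apply, hg_def]
      congr 1
      exact Finset.sum_coe_sort I (fun i => u i * (X i a - d i))
    rw [hF, hG] at hcomp
    have hmF : AEStronglyMeasurable (fun a => exp (u j * (X j a - d j))) μ :=
      ((((hX j).sub measurable_const).const_mul (u j)).exp).aestronglyMeasurable
    have hmG : AEStronglyMeasurable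
        (fun a => exp (∑ i ∈ I, u i * (X i a - d i))) μ := by
      apply Measurable.aestronglyMeasurable
      apply Measurable.exp
      exact Finset.measurable_sum _ fun i _ =>
        (((hX i).sub measurable_const).const_mul (u i))
    have hmul := IndepFun.integral_mul_eq_mul_integral hcomp hmF hmG
    have hsplit : (fun a => exp (∑ i ∈ insert j I, u i * (X i a - d i)))
        = (fun a => exp (u j * (X j a - d j)))
          * (fun a => exp (∑ i ∈ I, u i * (X i a - d i))) := by
      funext a
      simp only [Pi.mul_apply]
      rw [Finset.sum_insert hj, Real.exp_add]
    rw [hsplit]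
    rw [Finset.prod_insert hj, ← ih hI']
    exact hmul

end Indep

section MainLemma

variable {n : ℕ} {α : Type*} [MeasurableSpace α] {μ : Measure α} [IsProbabilityMeasure μ]
  {G : SimpleGraph (Fin n)} {c : Fin n → ℝ} {X : Fin n → α → ℝ}

lemma Janson.integrable_exp_linear_combo (hX : ∀ i, Measurable (X i))
    (av : Fin n → ℝ) (hav : ∀ i ω, X i ω ∈ Set.Icc (av i) (av i + c i))
    (u d : Fin n → ℝ) (I : Finset (Fin n)) :
    Integrable (fun a => exp (∑ i ∈ I, u i * (X i a - d i))) μ := by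
  have hXb : ∀ i ω, |X i ω| ≤ |av i| + |c i| := by
    intro i ω
    rcases hav i ω with ⟨h1, h2⟩
    rw [abs_le]
    constructor
    · have := neg_abs_le (av i)
      have := abs_nonneg (c i)
      linarith
    · have := le_abs_self (av i)
      have := le_abs_self (c i)
      linarith
  apply Janson.integrable_exp_of_bounded
    (M := ∑ i ∈ I, |u i| * (|av i| + |c i| + |d i|))
  · exact Finset.measurable_sum _ fun i _ => ((hX i).sub measurable_const).const_mul (u i)
  · intro ω
    apply Finset.sum_le_sum
    intro i _
    have habs : |X i ω - d i| ≤ |X i ω| + |d i| := by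
      calc |X i ω - d i| = |X i ω + -(d i)| := by rw [sub_eq_add_neg]
        _ ≤ |X i ω| + |-(d i)| := abs_add_le _ _
        _ = |X i ω| + |d i| := by rw [abs_neg]
    calc u i * (X i ω - d i) ≤ |u i * (X i ω - d i)| := le_abs_self _
      _ = |u i| * |X i ω - d i| := abs_mul _ _
      _ ≤ |u i| * (|av i| + |c i| + |d i|) := by
          apply mul_le_mul_of_nonneg_left _ (abs_nonneg _)
          have := hXb i ω
          linarith

lemma Janson.main (hc : ∀ i, 0 ≤ c i) (hX : ∀ i, Measurable (X i))
    (hdep : GDependent μ G X)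
    (av : Fin n → ℝ) (hav : ∀ i ω, X i ω ∈ Set.Icc (av i) (av i + c i))
    (hCpos : 0 < ∑ i, c i ^ 2)
    (g : Finset (Fin n) → ℝ) (hg : IsFracColoring G g)
    (t : ℝ) (ht : 0 < t) :
    μ {a | t ≤ (∑ i, X i a) - ∫ a, (∑ i, X i a) ∂μ}
      ≤ ENNReal.ofReal (exp (-(2 * t ^ 2) /
          ((∑ I : Finset (Fin n), g I) * ∑ i, c i ^ 2))) := by
  classical
  set C := ∑ i, c i ^ 2 with hC_def
  set W := ∑ I : Finset (Fin n), g I with hW_def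
  have hgnn : ∀ I, 0 ≤ g I := fun I => (hg.1 I).1
  have hn : Nonempty (Fin n) := by
    by_contra h
    rw [not_nonempty_iff] at h
    rw [hC_def] at hCpos
    rw [Finset.univ_eq_empty, Finset.sum_empty] at hCpos
    exact lt_irrefl 0 hCpos
  obtain ⟨v⟩ := hn
  have hT1 : ∀ i, 1 ≤ Janson.Tw g i := fun i => hg.2.2 i
  have hTpos : ∀ i, 0 < Janson.Tw g i := fun i => lt_of_lt_of_le one_pos (hT1 i)
  have hW1 : 1 ≤ W := by
    calc (1:ℝ) ≤ Janson.Tw g v := hT1 v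
      _ ≤ W := Finset.sum_le_sum_of_subset_of_nonneg (Finset.filter_subset _ _)
          (fun I _ _ => hgnn I)
  have hWpos : 0 < W := lt_of_lt_of_le one_pos hW1
  set m : Fin n → ℝ := fun i => ∫ a, X i a ∂μ with hm_def
  set Z : α → ℝ := fun a => ∑ i, (X i a - m i) with hZ_def
  have hXint : ∀ i, Integrable (X i) μ := by
    intro i
    apply Janson.integrable_of_bounded (hX i) (M := |av i| + |c i|)
    intro ω
    rcases hav i ω with ⟨h1, h2⟩
    rw [abs_le]
    constructor
    · have := neg_abs_le (av i)
      have := abs_nonneg (c i)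
      linarith
    · have := le_abs_self (av i)
      have := le_abs_self (c i)
      linarith
  have hES : ∫ a, (∑ i, X i a) ∂μ = ∑ i, m i := by
    rw [integral_finset_sum _ (fun i _ => hXint i)]
  have hevent : {a | t ≤ (∑ i, X i a) - ∫ a, (∑ i, X i a) ∂μ} = {ω | t ≤ Z ω} := by
    ext a
    simp only [Set.mem_setOf_eq, hES, hZ_def, Finset.sum_sub_distrib]
  set s : ℝ := 4 * t / (W * C) with hs_def
  have hspos : 0 < s := div_pos (by linarith) (by positivity)
  have hZlin : ∀ r : ℝ, (fun a => exp (r * Z a))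
      = fun a => exp (∑ i, (fun _ : Fin n => r) i * (X i a - m i)) := by
    intro r
    funext a
    rw [hZ_def, Finset.mul_sum]
  have hint : Integrable (fun ω => exp (s * Z ω)) μ := by
    rw [hZlin s]
    exact Janson.integrable_exp_linear_combo hX av hav _ m Finset.univ
  -- Step A : mgf bound
  have hmgfA : ∫ a, exp (s * Z a) ∂μ ≤ exp (s ^ 2 * W * C / 8) := by
    set p : Finset (Fin n) → ℝ := fun I => g I / W with hp_def
    have hpnn : ∀ I, 0 ≤ p I := fun I => div_nonneg (hgnn I) hWpos.le
    have hpsum : ∑ I : Finset (Fin n), p I = 1 := by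
      rw [hp_def, ← Finset.sum_div, ← hW_def, div_self hWpos.ne']
    set SI : Finset (Fin n) → α → ℝ :=
      fun I a => ∑ i ∈ I, (1 / Janson.Tw g i) * (X i a - m i) with hSI_def
    have hSImeas : ∀ I, Measurable (SI I) := by
      intro I
      exact Finset.measurable_sum _ fun i _ =>
        ((hX i).sub measurable_const).const_mul _
    have hdecomp : ∀ a, ∑ I : Finset (Fin n), p I * (s * W * SI I a) = s * Z a := by
      intro a
      have h1 : ∀ I, p I * (s * W * SI I a) = s * (g I * SI I a) := by
        intro I
        rw [hp_def]
        field_simp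
      simp_rw [h1]
      rw [← Finset.mul_sum]
      have h2 : ∑ I : Finset (Fin n), g I * SI I a
          = ∑ i, (1 / Janson.Tw g i) * (X i a - m i) * Janson.Tw g i :=
        Janson.sum_mul_sum_swap g _
      rw [h2]
      congr 1
      rw [hZ_def]
      refine Finset.sum_congr rfl fun i _ => ?_
      have hT := (hTpos i).ne'
      field_simp
    have hSIcombo : ∀ (r : ℝ) I, (fun a => exp (r * SI I a))
        = fun a => exp (∑ i ∈ I, (r / Janson.Tw g i) * (X i a - m i)) := by
      intro r I
      funext a
      simp only [hSI_def]
      rw [Finset.mul_sum]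
      congr 1
      refine Finset.sum_congr rfl fun i _ => ?_
      field_simp
    have hSIint : ∀ (r : ℝ) I, Integrable (fun a => exp (r * SI I a)) μ := by
      intro r I
      rw [hSIcombo r I]
      exact Janson.integrable_exp_linear_combo hX av hav _ m I
    have hHolder := ENNReal.lintegral_prod_norm_pow_le (μ := μ) Finset.univ
      (f := fun I (a : α) => ENNReal.ofReal (exp (s * W * SI I a)))
      (fun I _ => ((((hSImeas I).const_mul (s * W)).exp).ennreal_ofReal).aemeasurable)
      hpsum (fun I _ => hpnn I)
    have hLHS : ∫⁻ a, ∏ I : Finset (Fin n),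
        (ENNReal.ofReal (exp (s * W * SI I a))) ^ (p I) ∂μ
        = ENNReal.ofReal (∫ a, exp (s * Z a) ∂μ) := by
      have h1 : ∀ a, ∏ I : Finset (Fin n), (ENNReal.ofReal (exp (s * W * SI I a))) ^ (p I)
          = ENNReal.ofReal (exp (s * Z a)) := by
        intro a
        rw [Janson.prod_ofReal_exp_rpow Finset.univ p _ (fun I _ => hpnn I), hdecomp a]
      simp_rw [h1]
      rw [← ofReal_integral_eq_lintegral_ofReal hint
        (Filter.Eventually.of_forall fun a => exp_nonneg _)]
    set A : Finset (Fin n) → ℝ := fun I => ∑ i ∈ I, c i ^ 2 / (Janson.Tw g i) ^ 2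
      with hA_def
    have hfactor : ∀ I ∈ (Finset.univ : Finset (Finset (Fin n))),
        (∫⁻ a, ENNReal.ofReal (exp (s * W * SI I a)) ∂μ) ^ (p I)
          ≤ (ENNReal.ofReal (exp (s ^ 2 * W ^ 2 * A I / 8))) ^ (p I) := by
      intro I _
      rcases eq_or_ne (p I) 0 with h0 | h0
      · rw [h0, ENNReal.rpow_zero, ENNReal.rpow_zero]
      · have hgI : g I ≠ 0 := by
          intro h
          apply h0
          rw [hp_def]
          simp only [h, zero_div]
        have hIindep : IsIndepFinset G I := by
          by_contra h
          exact hgI (hg.2.1 I h)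
        have hreal : ∫ a, exp (s * W * SI I a) ∂μ ≤ exp (s ^ 2 * W ^ 2 * A I / 8) := by
          rw [hSIcombo (s * W) I,
            Janson.indep_prod_exp hX hdep _ m I hIindep]
          calc ∏ i ∈ I, ∫ a, exp ((s * W / Janson.Tw g i) * (X i a - m i)) ∂μ
              ≤ ∏ i ∈ I, exp ((s * W / Janson.Tw g i) ^ 2 * (c i) ^ 2 / 8) := by
                apply Finset.prod_le_prod
                · intro i _
                  exact integral_nonneg fun a => exp_nonneg _
                · intro i _
                  exact Janson.hoeffding_centered (hX i) (hc i) (hav i) _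
            _ = exp (∑ i ∈ I, (s * W / Janson.Tw g i) ^ 2 * (c i) ^ 2 / 8) :=
                (Real.exp_sum _ _).symm
            _ = exp (s ^ 2 * W ^ 2 * A I / 8) := by
                congr 1
                simp only [hA_def]
                conv_rhs => rw [Finset.mul_sum, Finset.sum_div]
                refine Finset.sum_congr rfl fun i _ => ?_
                rw [div_pow]
                ring
        have h1 : ∫⁻ a, ENNReal.ofReal (exp (s * W * SI I a)) ∂μ
            ≤ ENNReal.ofReal (exp (s ^ 2 * W ^ 2 * A I / 8)) := by
          rw [← ofReal_integral_eq_lintegral_ofReal (hSIint (s * W) I)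
            (Filter.Eventually.of_forall fun a => exp_nonneg _)]
          exact ENNReal.ofReal_le_ofReal hreal
        exact ENNReal.rpow_le_rpow h1 (hpnn I)
    have hRHS : ∏ I : Finset (Fin n), (ENNReal.ofReal (exp (s ^ 2 * W ^ 2 * A I / 8))) ^ (p I)
        ≤ ENNReal.ofReal (exp (s ^ 2 * W * C / 8)) := by
      rw [Janson.prod_ofReal_exp_rpow Finset.univ p _ (fun I _ => hpnn I)]
      apply ENNReal.ofReal_le_ofReal
      apply exp_le_exp.mpr
      have h2 : ∑ I : Finset (Fin n), p I * (s ^ 2 * W ^ 2 * A I / 8)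
          = (s ^ 2 * W / 8) * ∑ I : Finset (Fin n), g I * A I := by
        rw [Finset.mul_sum]
        refine Finset.sum_congr rfl fun I _ => ?_
        rw [hp_def]
        field_simp
      rw [h2]
      have h3 : ∑ I : Finset (Fin n), g I * A I = ∑ i, c i ^ 2 / Janson.Tw g i := by
        calc ∑ I : Finset (Fin n), g I * A I
            = ∑ i, (c i ^ 2 / (Janson.Tw g i) ^ 2) * Janson.Tw g i :=
              Janson.sum_mul_sum_swap g _
          _ = ∑ i, c i ^ 2 / Janson.Tw g i := by
              refine Finset.sum_congr rfl fun i _ => ?_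
              have := (hTpos i).ne'
              field_simp
      rw [h3]
      have h4 : ∑ i, c i ^ 2 / Janson.Tw g i ≤ C := by
        rw [hC_def]
        apply Finset.sum_le_sum
        intro i _
        exact div_le_self (by positivity) (hT1 i)
      calc (s ^ 2 * W / 8) * ∑ i, c i ^ 2 / Janson.Tw g i
          ≤ (s ^ 2 * W / 8) * C := mul_le_mul_of_nonneg_left h4 (by positivity)
        _ = s ^ 2 * W * C / 8 := by ring
    have hchain := le_trans hHolder (le_trans (Finset.prod_le_prod' hfactor) hRHS)
    rw [hLHS] at hchain
    exact (ENNReal.ofReal_le_ofReal_iff (exp_nonneg _)).mp hchain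
  -- Step B : Chernoff
  have hcher := measure_ge_le_exp_mul_mgf (μ := μ) (X := Z) (t := s) t hspos.le hint
  have hmgf_eq : mgf Z μ s = ∫ a, exp (s * Z a) ∂μ := rfl
  have hfin : (μ {ω | t ≤ Z ω}).toReal ≤ exp (-(2 * t ^ 2) / (W * C)) := by
    calc (μ {ω | t ≤ Z ω}).toReal ≤ exp (-s * t) * mgf Z μ s := hcher
      _ ≤ exp (-s * t) * exp (s ^ 2 * W * C / 8) := by
          rw [hmgf_eq]
          exact mul_le_mul_of_nonneg_left hmgfA (exp_nonneg _)
      _ = exp (-s * t + s ^ 2 * W * C / 8) := (Real.exp_add _ _).symm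
      _ = exp (-(2 * t ^ 2) / (W * C)) := by
          congr 1
          rw [hs_def]
          have h5 : W * C ≠ 0 := by positivity
          field_simp
          ring
  rw [hevent]
  calc μ {ω | t ≤ Z ω} = ENNReal.ofReal ((μ {ω | t ≤ Z ω}).toReal) :=
        (ENNReal.ofReal_toReal (measure_ne_top μ _)).symm
    _ ≤ ENNReal.ofReal (exp (-(2 * t ^ 2) / (W * C))) := ENNReal.ofReal_le_ofReal hfin

end MainLemma

theorem janson_concentration {n : ℕ}
    {α : Type*} [MeasurableSpace α] (μ : Measure α) [IsProbabilityMeasure μ]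
    (G : SimpleGraph (Fin n))
    (c : Fin n → ℝ) (hc : ∀ i, 0 ≤ c i)
    (X : Fin n → α → ℝ) (hX : ∀ i, Measurable (X i))
    (hdep : GDependent μ G X)
    (hrange : ∀ i, ∃ a : ℝ, ∀ ω, X i ω ∈ Set.Icc a (a + c i))
    (t : ℝ) (ht : 0 < t) :
    μ {a | t ≤ (∑ i, X i a) - ∫ a, (∑ i, X i a) ∂μ}
      ≤ ENNReal.ofReal (Real.exp (-(2 * t ^ 2) /
          (fracChromatic G * ∑ i, c i ^ 2))) := by
  classical
  choose av hav using hrange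
  by_cases hC : (∑ i, c i ^ 2) = 0
  · -- degenerate case : all variables are constant
    have hc0 : ∀ i, c i = 0 := by
      intro i
      have h := (Finset.sum_eq_zero_iff_of_nonneg
        (fun j _ => by positivity : ∀ j ∈ Finset.univ, 0 ≤ c j ^ 2)).mp hC i (Finset.mem_univ i)
      exact pow_eq_zero_iff (two_ne_zero) |>.mp h
    have hXconst : ∀ i ω, X i ω = av i := by
      intro i ω
      have h := hav i ω
      rw [hc0 i, add_zero] at h
      exact le_antisymm h.2 h.1
    have hempty : {a | t ≤ (∑ i, X i a) - ∫ a, (∑ i, X i a) ∂μ} = ∅ := by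
      ext a
      simp only [Set.mem_setOf_eq, Set.mem_empty_iff_false, iff_false, not_le]
      have h1 : ∀ b : α, (∑ i, X i b) = ∑ i, av i :=
        fun b => Finset.sum_congr rfl fun i _ => hXconst i b
      have h2 : ∫ a, (∑ i, X i a) ∂μ = ∑ i, av i := by
        rw [show (fun a => ∑ i, X i a) = fun _ => ∑ i, av i from funext h1]
        simp
      rw [h1 a, h2]
      simpa using ht
    rw [hempty]
    simp
  · have hCpos : 0 < ∑ i, c i ^ 2 :=
      lt_of_le_of_ne (Finset.sum_nonneg fun i _ => by positivity) (Ne.symm hC)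
    set Sset : Set ℝ :=
      {x : ℝ | ∃ g : Finset (Fin n) → ℝ, IsFracColoring G g ∧
        x = ∑ I : Finset (Fin n), g I} with hSset_def
    have hχ_def : fracChromatic G = sInf Sset := rfl
    have hn : Nonempty (Fin n) := by
      by_contra h
      rw [not_nonempty_iff] at h
      rw [Finset.univ_eq_empty, Finset.sum_empty] at hCpos
      exact lt_irrefl 0 hCpos
    have hSne : Sset.Nonempty := by
      set g0 : Finset (Fin n) → ℝ := fun I => if IsIndepFinset G I then (1:ℝ) else 0
        with hg0
      have hg0nn : ∀ I, 0 ≤ g0 I ∧ g0 I ≤ 1 := by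
        intro I
        by_cases h : IsIndepFinset G I <;> simp [hg0, h]
      refine ⟨∑ I : Finset (Fin n), g0 I, g0, ⟨hg0nn, ?_, ?_⟩, rfl⟩
      · intro I h
        simp [hg0, h]
      · intro v
        have hv : IsIndepFinset G {v} := by
          intro i hi j hj
          rw [Finset.mem_singleton] at hi hj
          subst hi; subst hj
          exact G.irrefl
        have hmem : ({v} : Finset (Fin n)) ∈
            Finset.univ.filter (fun I : Finset (Fin n) => v ∈ I) := by
          simp
        have h1 : g0 {v} = 1 := by simp [hg0, hv]
        calc (1:ℝ) = g0 {v} := h1.symm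
          _ ≤ _ := Finset.single_le_sum (fun I _ => (hg0nn I).1) hmem
    have hSlb : ∀ x ∈ Sset, (1:ℝ) ≤ x := by
      rintro x ⟨g, hg, rfl⟩
      obtain ⟨v⟩ := hn
      calc (1:ℝ) ≤ ∑ I ∈ Finset.univ.filter (fun I : Finset (Fin n) => v ∈ I), g I :=
            hg.2.2 v
        _ ≤ ∑ I : Finset (Fin n), g I :=
            Finset.sum_le_sum_of_subset_of_nonneg (Finset.filter_subset _ _)
              (fun I _ _ => (hg.1 I).1)
    have hχ1 : 1 ≤ fracChromatic G := by
      rw [hχ_def]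
      exact le_csInf hSne hSlb
    have hχpos : 0 < fracChromatic G := lt_of_lt_of_le one_pos hχ1
    set C := ∑ i, c i ^ 2 with hC_def
    set χ := fracChromatic G with hχdef2
    have key : ∀ ε : ℝ, 0 < ε →
        μ {a | t ≤ (∑ i, X i a) - ∫ a, (∑ i, X i a) ∂μ}
          ≤ ENNReal.ofReal (exp (-(2 * t ^ 2) / ((χ + ε) * C))) := by
      intro ε hε
      have hlt : sInf Sset < χ + ε := by
        rw [← hχ_def]
        exact lt_add_of_pos_right χ hε
      obtain ⟨x, hxS, hxlt⟩ := exists_lt_of_csInf_lt hSne hlt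
      obtain ⟨g, hg, rfl⟩ := hxS
      have h1 := Janson.main hc hX hdep av hav hCpos g hg t ht
      refine le_trans h1 (ENNReal.ofReal_le_ofReal (exp_le_exp.mpr ?_))
      have hWpos : 0 < ∑ I : Finset (Fin n), g I :=
        lt_of_lt_of_le one_pos (hSlb _ ⟨g, hg, rfl⟩)
      rw [neg_div, neg_div, neg_le_neg_iff]
      apply div_le_div_of_nonneg_left (by positivity) (by positivity)
      exact mul_le_mul_of_nonneg_right (le_of_lt hxlt) hCpos.le
    have hten : Filter.Tendsto
        (fun ε : ℝ => ENNReal.ofReal (exp (-(2 * t ^ 2) / ((χ + ε) * C))))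
        (nhdsWithin 0 (Set.Ioi 0))
        (nhds (ENNReal.ofReal (exp (-(2 * t ^ 2) / (χ * C))))) := by
      have hcont : ContinuousAt
          (fun ε : ℝ => ENNReal.ofReal (exp (-(2 * t ^ 2) / ((χ + ε) * C)))) 0 := by
        apply ENNReal.continuous_ofReal.continuousAt.comp
        apply Real.continuous_exp.continuousAt.comp
        apply ContinuousAt.div continuousAt_const
        · exact (continuousAt_const.add continuousAt_id).mul continuousAt_const
        · simp only [add_zero]
          positivity
      have h1 := hcont.tendsto
      simp only [add_zero] at h1
      exact h1.mono_left nhdsWithin_le_nhds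
    refine ge_of_tendsto hten ?_
    exact eventually_mem_nhdsWithin.mono fun ε hε => key ε hε
end
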